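/- arXiv:2309.16156 — 4 statements merged into one kernel-verified Lean document; each statement's English description precedes it below -/
import Mathlib

section
/- Let G₁ and G₂ be finite connected simple graphs with n₁ and n₂ vertices, distance matrices D₁, D₂, and nonnegative curvatures w₁, w₂ (Dᵢwᵢ = nᵢ·𝟏, wᵢ ≥ 0 entrywise). Let G be the graph obtained by adding an edge {u,v} between G₁ and G₂ with u ∈ V(G₁), v ∈ V(G₂). Then G has a curvature w with D_G w = (n₁+n₂)·𝟏 whose value at u equals [‖w₂‖₁(n₁+n₂) / (n₁‖w₂‖₁ + n₂‖w₁‖₁ + ½‖w₁‖₁‖w₂‖₁)] · (w₁(u) − ½‖w₁‖₁) and whose value at v equals [‖w₁‖₁(n₁+n₂) / (n₁‖w₂‖₁ + n₂‖w₁‖₁ + ½‖w₁‖₁‖w₂‖₁)] · (w₂(v) − ½‖w₂‖₁), and whose value at every other vertex x is a positive multiple of w₁(x) (if x ∈ V(G₁)) or of w₂(x) (if x ∈ V(G₂)). -/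
/-- The graph obtained by adding an edge between the vertex `u` of `G₁` and the
vertex `v` of `G₂` (the graphs being on disjoint vertex sets). -/
def bridgeGraph {V₁ V₂ : Type*} (G₁ : SimpleGraph V₁) (G₂ : SimpleGraph V₂)
    (u : V₁) (v : V₂) : SimpleGraph (V₁ ⊕ V₂) :=
  SimpleGraph.fromRel (fun x y =>
    (∃ a b, x = Sum.inl a ∧ y = Sum.inl b ∧ G₁.Adj a b) ∨
    (∃ a b, x = Sum.inr a ∧ y = Sum.inr b ∧ G₂.Adj a b) ∨
    (x = Sum.inl u ∧ y = Sum.inr v))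

section bridge
open SimpleGraph Sum
variable {V₁ V₂ : Type*} {G₁ : SimpleGraph V₁} {G₂ : SimpleGraph V₂} {u : V₁} {v : V₂}

lemma bridge_adj_ll {a b : V₁} :
    (bridgeGraph G₁ G₂ u v).Adj (Sum.inl a) (Sum.inl b) ↔ G₁.Adj a b := by
  constructor
  · rintro ⟨hne, h | h⟩ <;>
      rcases h with ⟨a', b', ha, hb, h⟩ | ⟨a', b', ha, hb, h⟩ | ⟨ha, hb⟩ <;> simp_all
    exact h.symm
  · intro h
    exact ⟨by simp [h.ne], Or.inl (Or.inl ⟨a, b, rfl, rfl, h⟩)⟩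

lemma bridge_adj_rr {a b : V₂} :
    (bridgeGraph G₁ G₂ u v).Adj (Sum.inr a) (Sum.inr b) ↔ G₂.Adj a b := by
  constructor
  · rintro ⟨hne, h | h⟩ <;>
      rcases h with ⟨a', b', ha, hb, h⟩ | ⟨a', b', ha, hb, h⟩ | ⟨ha, hb⟩ <;> simp_all
    exact h.symm
  · intro h
    exact ⟨by simp [h.ne], Or.inl (Or.inr (Or.inl ⟨a, b, rfl, rfl, h⟩))⟩

lemma bridge_adj_lr {a : V₁} {b : V₂} :
    (bridgeGraph G₁ G₂ u v).Adj (Sum.inl a) (Sum.inr b) ↔ a = u ∧ b = v := by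
  constructor
  · rintro ⟨hne, h | h⟩ <;>
      rcases h with ⟨a', b', ha, hb, h⟩ | ⟨a', b', ha, hb, h⟩ | ⟨ha, hb⟩ <;> simp_all
  · rintro ⟨rfl, rfl⟩
    exact ⟨by simp, Or.inl (Or.inr (Or.inr ⟨rfl, rfl⟩))⟩


def bridgeHomInl : G₁ →g bridgeGraph G₁ G₂ u v :=
  ⟨Sum.inl, fun h => bridge_adj_ll.mpr h⟩

def bridgeHomInr : G₂ →g bridgeGraph G₁ G₂ u v :=
  ⟨Sum.inr, fun h => bridge_adj_rr.mpr h⟩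

@[simp] lemma bridgeHomInl_apply (a : V₁) :
    bridgeHomInl (G₁ := G₁) (G₂ := G₂) (u := u) (v := v) a = Sum.inl a := rfl

@[simp] lemma bridgeHomInr_apply (a : V₂) :
    bridgeHomInr (G₁ := G₁) (G₂ := G₂) (u := u) (v := v) a = Sum.inr a := rfl

lemma bridge_walk_len_ll (hG₁ : G₁.Connected) :
    ∀ {x z : V₁ ⊕ V₂} (p : (bridgeGraph G₁ G₂ u v).Walk x z),
      G₁.dist (Sum.elim id (fun _ => u) x) (Sum.elim id (fun _ => u) z) ≤ p.length := by
  intro x z p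
  induction p with
  | nil => simp
  | @cons x y zz h q ih =>
    rw [SimpleGraph.Walk.length_cons]
    have step : Sum.elim id (fun _ => u) x = Sum.elim id (fun _ => u) y ∨
        G₁.Adj (Sum.elim id (fun _ => u) x) (Sum.elim id (fun _ => u) y) := by
      rcases x with a | c <;> rcases y with a' | c'
      · exact Or.inr (bridge_adj_ll.mp h)
      · obtain ⟨rfl, rfl⟩ := bridge_adj_lr.mp h; simp
      · obtain ⟨rfl, rfl⟩ := bridge_adj_lr.mp h.symm; simp
      · simp
    rcases step with heq | hadj
    · rw [heq]; omega
    · have t := hG₁.dist_triangle (u := Sum.elim id (fun _ => u) x)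
        (v := Sum.elim id (fun _ => u) y) (w := Sum.elim id (fun _ => u) zz)
      have h1 : G₁.dist (Sum.elim id (fun _ => u) x) (Sum.elim id (fun _ => u) y) = 1 :=
        SimpleGraph.dist_eq_one_iff_adj.mpr hadj
      omega

lemma bridge_walk_len_rr (hG₂ : G₂.Connected) :
    ∀ {x z : V₁ ⊕ V₂} (p : (bridgeGraph G₁ G₂ u v).Walk x z),
      G₂.dist (Sum.elim (fun _ => v) id x) (Sum.elim (fun _ => v) id z) ≤ p.length := by
  intro x z p
  induction p with
  | nil => simp
  | @cons x y zz h q ih =>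
    rw [SimpleGraph.Walk.length_cons]
    have step : Sum.elim (fun _ => v) id x = Sum.elim (fun _ => v) id y ∨
        G₂.Adj (Sum.elim (fun _ => v) id x) (Sum.elim (fun _ => v) id y) := by
      rcases x with a | c <;> rcases y with a' | c'
      · simp
      · obtain ⟨rfl, rfl⟩ := bridge_adj_lr.mp h; simp
      · obtain ⟨rfl, rfl⟩ := bridge_adj_lr.mp h.symm; simp
      · exact Or.inr (bridge_adj_rr.mp h)
    rcases step with heq | hadj
    · rw [heq]; omega
    · have t := hG₂.dist_triangle (u := Sum.elim (fun _ => v) id x)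
        (v := Sum.elim (fun _ => v) id y) (w := Sum.elim (fun _ => v) id zz)
      have h1 : G₂.dist (Sum.elim (fun _ => v) id x) (Sum.elim (fun _ => v) id y) = 1 :=
        SimpleGraph.dist_eq_one_iff_adj.mpr hadj
      omega

lemma bridge_walk_len_lr (hG₁ : G₁.Connected) (hG₂ : G₂.Connected) {b : V₂} :
    ∀ {x z : V₁ ⊕ V₂} (p : (bridgeGraph G₁ G₂ u v).Walk x z) (_ : z = Sum.inr b),
      Sum.elim (fun a => G₁.dist a u + 1 + G₂.dist v b) (fun c => G₂.dist c b) x ≤ p.length := by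
  intro x z p
  induction p with
  | nil => rintro rfl; simp
  | @cons x y zz h q ih =>
    rintro rfl
    have ih := ih rfl
    rw [SimpleGraph.Walk.length_cons]
    rcases x with a | c <;> rcases y with a' | c'
    · have hadj := bridge_adj_ll.mp h
      have t := hG₁.dist_triangle (u := a) (v := a') (w := u)
      have h1 : G₁.dist a a' = 1 := SimpleGraph.dist_eq_one_iff_adj.mpr hadj
      simp only [Sum.elim_inl] at ih ⊢
      omega
    · obtain ⟨rfl, rfl⟩ := bridge_adj_lr.mp h
      simp only [Sum.elim_inl, Sum.elim_inr] at ih ⊢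
      simp [SimpleGraph.dist_self]
      omega
    · obtain ⟨rfl, rfl⟩ := bridge_adj_lr.mp h.symm
      simp only [Sum.elim_inl, Sum.elim_inr] at ih ⊢
      omega
    · have hadj := bridge_adj_rr.mp h
      have t := hG₂.dist_triangle (u := c) (v := c') (w := b)
      have h1 : G₂.dist c c' = 1 := SimpleGraph.dist_eq_one_iff_adj.mpr hadj
      simp only [Sum.elim_inr] at ih ⊢
      omega

lemma bridge_dist_ll (hG₁ : G₁.Connected) (a b : V₁) :
    (bridgeGraph G₁ G₂ u v).dist (Sum.inl a) (Sum.inl b) = G₁.dist a b := by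
  obtain ⟨p, hp⟩ := hG₁.exists_walk_length_eq_dist a b
  have ub := SimpleGraph.dist_le (p.map (bridgeHomInl (G₂ := G₂) (u := u) (v := v)))
  rw [SimpleGraph.Walk.length_map, hp] at ub
  obtain ⟨q, hq⟩ := SimpleGraph.Reachable.exists_walk_length_eq_dist
    ⟨p.map (bridgeHomInl (G₂ := G₂) (u := u) (v := v))⟩
  have lb := bridge_walk_len_ll hG₁ q
  simp only [bridgeHomInl_apply, Sum.elim_inl, id_eq] at lb hq ub
  omega

lemma bridge_dist_lr (hG₁ : G₁.Connected) (hG₂ : G₂.Connected) (a : V₁) (b : V₂) :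
    (bridgeGraph G₁ G₂ u v).dist (Sum.inl a) (Sum.inr b)
      = G₁.dist a u + 1 + G₂.dist v b := by
  obtain ⟨p, hp⟩ := hG₁.exists_walk_length_eq_dist a u
  obtain ⟨q, hq⟩ := hG₂.exists_walk_length_eq_dist v b
  have hadj : (bridgeGraph G₁ G₂ u v).Adj
      (bridgeHomInl (G₁ := G₁) (G₂ := G₂) (u := u) (v := v) u)
      (bridgeHomInr (G₁ := G₁) (G₂ := G₂) (u := u) (v := v) v) :=
    bridge_adj_lr.mpr ⟨rfl, rfl⟩
  have ub := SimpleGraph.dist_le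
    ((p.map (bridgeHomInl (G₂ := G₂) (u := u) (v := v))).append
      (SimpleGraph.Walk.cons hadj (q.map (bridgeHomInr (G₁ := G₁) (u := u) (v := v)))))
  rw [SimpleGraph.Walk.length_append, SimpleGraph.Walk.length_cons,
    SimpleGraph.Walk.length_map, SimpleGraph.Walk.length_map, hp, hq] at ub
  obtain ⟨r, hr⟩ := SimpleGraph.Reachable.exists_walk_length_eq_dist
    (⟨(p.map (bridgeHomInl (G₂ := G₂) (u := u) (v := v))).append
      (SimpleGraph.Walk.cons hadj (q.map (bridgeHomInr (G₁ := G₁) (u := u) (v := v))))⟩ :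
      (bridgeGraph G₁ G₂ u v).Reachable (Sum.inl a) (Sum.inr b))
  have lb := bridge_walk_len_lr hG₁ hG₂ r rfl
  simp only [bridgeHomInl_apply, bridgeHomInr_apply, Sum.elim_inl] at lb hr ub
  omega

lemma bridge_dist_rr (hG₂ : G₂.Connected) (a b : V₂) :
    (bridgeGraph G₁ G₂ u v).dist (Sum.inr a) (Sum.inr b) = G₂.dist a b := by
  obtain ⟨p, hp⟩ := hG₂.exists_walk_length_eq_dist a b
  have ub := SimpleGraph.dist_le (p.map (bridgeHomInr (G₁ := G₁) (u := u) (v := v)))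
  rw [SimpleGraph.Walk.length_map, hp] at ub
  obtain ⟨q, hq⟩ := SimpleGraph.Reachable.exists_walk_length_eq_dist
    ⟨p.map (bridgeHomInr (G₁ := G₁) (u := u) (v := v))⟩
  have lb := bridge_walk_len_rr hG₂ q
  simp only [bridgeHomInr_apply, Sum.elim_inr, id_eq] at lb hq ub
  omega

lemma bridge_dist_rl (hG₁ : G₁.Connected) (hG₂ : G₂.Connected) (a : V₂) (b : V₁) :
    (bridgeGraph G₁ G₂ u v).dist (Sum.inr a) (Sum.inl b)
      = G₁.dist b u + 1 + G₂.dist v a := by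
  rw [SimpleGraph.dist_comm, bridge_dist_lr hG₁ hG₂]

end bridge

/-- Explicit values of the curvature of the bridged graph at the endpoints
of the added edge, and the fact that at every other vertex the curvature is a positive
multiple of the original curvature there. -/
theorem stmt_5 {V₁ V₂ : Type*} [Fintype V₁] [Fintype V₂]
    (G₁ : SimpleGraph V₁) (G₂ : SimpleGraph V₂)
    (hG₁ : G₁.Connected) (hG₂ : G₂.Connected)
    (D₁ : Matrix V₁ V₁ ℝ) (hD₁ : ∀ a b, D₁ a b = (G₁.dist a b : ℝ))
    (D₂ : Matrix V₂ V₂ ℝ) (hD₂ : ∀ a b, D₂ a b = (G₂.dist a b : ℝ))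
    (w₁ : V₁ → ℝ) (hw₁0 : ∀ i, 0 ≤ w₁ i)
    (hw₁ : D₁.mulVec w₁ = fun _ => (Fintype.card V₁ : ℝ))
    (w₂ : V₂ → ℝ) (hw₂0 : ∀ i, 0 ≤ w₂ i)
    (hw₂ : D₂.mulVec w₂ = fun _ => (Fintype.card V₂ : ℝ))
    (u : V₁) (v : V₂)
    (n₁ : ℝ) (hn₁ : n₁ = (Fintype.card V₁ : ℝ))
    (n₂ : ℝ) (hn₂ : n₂ = (Fintype.card V₂ : ℝ))
    (L₁ : ℝ) (hL₁ : L₁ = ∑ i, |w₁ i|)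
    (L₂ : ℝ) (hL₂ : L₂ = ∑ i, |w₂ i|) :
    ∃ w : V₁ ⊕ V₂ → ℝ,
      (Matrix.of fun a b => ((bridgeGraph G₁ G₂ u v).dist a b : ℝ)).mulVec w
          = (fun _ => n₁ + n₂) ∧
        w (Sum.inl u)
          = L₂ * (n₁ + n₂) / (n₁ * L₂ + n₂ * L₁ + (1 / 2) * L₁ * L₂)
            * (w₁ u - (1 / 2) * L₁) ∧
        w (Sum.inr v)
          = L₁ * (n₁ + n₂) / (n₁ * L₂ + n₂ * L₁ + (1 / 2) * L₁ * L₂)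
            * (w₂ v - (1 / 2) * L₂) ∧
        (∃ c : ℝ, 0 < c ∧ ∀ x : V₁, x ≠ u → w (Sum.inl x) = c * w₁ x) ∧
        (∃ c : ℝ, 0 < c ∧ ∀ y : V₂, y ≠ v → w (Sum.inr y) = c * w₂ y) := by
  classical
  have hn₁pos : (0:ℝ) < n₁ := by
    rw [hn₁]; exact_mod_cast Fintype.card_pos_iff.mpr ⟨u⟩
  have hn₂pos : (0:ℝ) < n₂ := by
    rw [hn₂]; exact_mod_cast Fintype.card_pos_iff.mpr ⟨v⟩
  have hL₁' : L₁ = ∑ i, w₁ i := by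
    rw [hL₁]; exact Finset.sum_congr rfl fun i _ => abs_of_nonneg (hw₁0 i)
  have hL₂' : L₂ = ∑ i, w₂ i := by
    rw [hL₂]; exact Finset.sum_congr rfl fun i _ => abs_of_nonneg (hw₂0 i)
  have hA : ∀ a : V₁, ∑ b, (G₁.dist a b : ℝ) * w₁ b = n₁ := by
    intro a
    have h := congrFun hw₁ a
    simp only [Matrix.mulVec, dotProduct] at h
    rw [hn₁, ← h]
    exact Finset.sum_congr rfl fun b _ => by rw [hD₁]
  have hB : ∀ a : V₂, ∑ b, (G₂.dist a b : ℝ) * w₂ b = n₂ := by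
    intro a
    have h := congrFun hw₂ a
    simp only [Matrix.mulVec, dotProduct] at h
    rw [hn₂, ← h]
    exact Finset.sum_congr rfl fun b _ => by rw [hD₂]
  have hL₁pos : (0:ℝ) < L₁ := by
    rcases lt_or_ge 0 L₁ with h | h
    · exact h
    · exfalso
      have hnn : ∀ i ∈ Finset.univ, (0:ℝ) ≤ |w₁ i| := fun i _ => abs_nonneg _
      have hz : ∑ i, |w₁ i| = 0 :=
        le_antisymm (hL₁ ▸ h) (Finset.sum_nonneg hnn)
      have h0 : ∀ i, w₁ i = 0 := fun i => by
        have := (Finset.sum_eq_zero_iff_of_nonneg hnn).mp hz i (Finset.mem_univ i)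
        simpa using this
      have := hA u
      simp only [h0, mul_zero, Finset.sum_const_zero] at this
      exact hn₁pos.ne' this.symm
  have hL₂pos : (0:ℝ) < L₂ := by
    rcases lt_or_ge 0 L₂ with h | h
    · exact h
    · exfalso
      have hnn : ∀ i ∈ Finset.univ, (0:ℝ) ≤ |w₂ i| := fun i _ => abs_nonneg _
      have hz : ∑ i, |w₂ i| = 0 :=
        le_antisymm (hL₂ ▸ h) (Finset.sum_nonneg hnn)
      have h0 : ∀ i, w₂ i = 0 := fun i => by
        have := (Finset.sum_eq_zero_iff_of_nonneg hnn).mp hz i (Finset.mem_univ i)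
        simpa using this
      have := hB v
      simp only [h0, mul_zero, Finset.sum_const_zero] at this
      exact hn₂pos.ne' this.symm
  set N : ℝ := n₁ * L₂ + n₂ * L₁ + (1 / 2) * L₁ * L₂ with hNdef
  have hNpos : (0:ℝ) < N := by
    have h1 := mul_pos hn₁pos hL₂pos
    have h2 := mul_pos hn₂pos hL₁pos
    have h3 := mul_pos hL₁pos hL₂pos
    rw [hNdef]; nlinarith
  set c₁ : ℝ := L₂ * (n₁ + n₂) / N with hc₁def
  set c₂ : ℝ := L₁ * (n₁ + n₂) / N with hc₂def
  have hc₁pos : (0:ℝ) < c₁ :=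
    div_pos (mul_pos hL₂pos (add_pos hn₁pos hn₂pos)) hNpos
  have hc₂pos : (0:ℝ) < c₂ :=
    div_pos (mul_pos hL₁pos (add_pos hn₁pos hn₂pos)) hNpos
  have hc : c₁ * L₁ = c₂ * L₂ := by rw [hc₁def, hc₂def]; ring
  have hfin : c₁ * n₁ + c₂ * n₂ + c₂ * (L₂ / 2) = n₁ + n₂ := by
    rw [hc₁def, hc₂def, hNdef]
    field_simp
  refine ⟨Sum.elim
      (fun x => c₁ * w₁ x + (if x = u then -(c₁ * (L₁ / 2)) else 0))
      (fun y => c₂ * w₂ y + (if y = v then -(c₂ * (L₂ / 2)) else 0)),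
    ?_, ?_, ?_, ⟨c₁, hc₁pos, fun x hx => ?_⟩, ⟨c₂, hc₂pos, fun y hy => ?_⟩⟩
  · funext z
    have hsum1 : ∑ cc : V₁,
        (c₁ * w₁ cc + (if cc = u then -(c₁ * (L₁ / 2)) else 0))
          = c₁ * L₁ - c₁ * (L₁ / 2) := by
      rw [Finset.sum_add_distrib, ← Finset.mul_sum, ← hL₁']
      simp [Finset.sum_ite_eq']
      ring
    have hsum2 : ∑ cc : V₂,
        (c₂ * w₂ cc + (if cc = v then -(c₂ * (L₂ / 2)) else 0))
          = c₂ * L₂ - c₂ * (L₂ / 2) := by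
      rw [Finset.sum_add_distrib, ← Finset.mul_sum, ← hL₂']
      simp [Finset.sum_ite_eq']
      ring
    cases z with
    | inl a =>
      show ∑ x : V₁ ⊕ V₂, ((bridgeGraph G₁ G₂ u v).dist (Sum.inl a) x : ℝ) * _ = n₁ + n₂
      rw [Fintype.sum_sum_type]
      have S1 : ∑ cc : V₁, ((bridgeGraph G₁ G₂ u v).dist (Sum.inl a) (Sum.inl cc) : ℝ)
            * (Sum.elim
              (fun x => c₁ * w₁ x + (if x = u then -(c₁ * (L₁ / 2)) else 0))
              (fun y => c₂ * w₂ y + (if y = v then -(c₂ * (L₂ / 2)) else 0)) (Sum.inl cc))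
          = c₁ * n₁ + (G₁.dist a u : ℝ) * (-(c₁ * (L₁ / 2))) := by
        have e1 : ∀ cc : V₁, ((bridgeGraph G₁ G₂ u v).dist (Sum.inl a) (Sum.inl cc) : ℝ)
              * (Sum.elim
                (fun x => c₁ * w₁ x + (if x = u then -(c₁ * (L₁ / 2)) else 0))
                (fun y => c₂ * w₂ y + (if y = v then -(c₂ * (L₂ / 2)) else 0)) (Sum.inl cc))
            = c₁ * ((G₁.dist a cc : ℝ) * w₁ cc)
              + (G₁.dist a cc : ℝ) * (if cc = u then -(c₁ * (L₁ / 2)) else 0) := by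
          intro cc
          rw [bridge_dist_ll hG₁, Sum.elim_inl]
          ring
        rw [Finset.sum_congr rfl fun cc _ => e1 cc, Finset.sum_add_distrib,
          ← Finset.mul_sum, hA a]
        congr 1
        simp [mul_ite, mul_zero, Finset.sum_ite_eq']
      have S2 : ∑ cc : V₂, ((bridgeGraph G₁ G₂ u v).dist (Sum.inl a) (Sum.inr cc) : ℝ)
            * (Sum.elim
              (fun x => c₁ * w₁ x + (if x = u then -(c₁ * (L₁ / 2)) else 0))
              (fun y => c₂ * w₂ y + (if y = v then -(c₂ * (L₂ / 2)) else 0)) (Sum.inr cc))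
          = ((G₁.dist a u : ℝ) + 1) * (c₂ * L₂ - c₂ * (L₂ / 2)) + c₂ * n₂ := by
        have e2 : ∀ cc : V₂, ((bridgeGraph G₁ G₂ u v).dist (Sum.inl a) (Sum.inr cc) : ℝ)
              * (Sum.elim
                (fun x => c₁ * w₁ x + (if x = u then -(c₁ * (L₁ / 2)) else 0))
                (fun y => c₂ * w₂ y + (if y = v then -(c₂ * (L₂ / 2)) else 0)) (Sum.inr cc))
            = ((G₁.dist a u : ℝ) + 1)
                * (c₂ * w₂ cc + (if cc = v then -(c₂ * (L₂ / 2)) else 0))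
              + (c₂ * ((G₂.dist v cc : ℝ) * w₂ cc)
                + (G₂.dist v cc : ℝ) * (if cc = v then -(c₂ * (L₂ / 2)) else 0)) := by
          intro cc
          rw [bridge_dist_lr hG₁ hG₂, Sum.elim_inr]
          push_cast
          ring
        rw [Finset.sum_congr rfl fun cc _ => e2 cc, Finset.sum_add_distrib,
          ← Finset.mul_sum, hsum2, Finset.sum_add_distrib, ← Finset.mul_sum, hB v]
        have : ∑ cc : V₂, (G₂.dist v cc : ℝ) * (if cc = v then -(c₂ * (L₂ / 2)) else 0)
            = 0 := by
          simp [mul_ite, mul_zero, Finset.sum_ite_eq', SimpleGraph.dist_self]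
        rw [this]
        ring
      rw [S1, S2]
      linear_combination hfin - ((G₁.dist a u : ℝ) / 2) * hc
    | inr b =>
      show ∑ x : V₁ ⊕ V₂, ((bridgeGraph G₁ G₂ u v).dist (Sum.inr b) x : ℝ) * _ = n₁ + n₂
      rw [Fintype.sum_sum_type]
      have S1 : ∑ cc : V₁, ((bridgeGraph G₁ G₂ u v).dist (Sum.inr b) (Sum.inl cc) : ℝ)
            * (Sum.elim
              (fun x => c₁ * w₁ x + (if x = u then -(c₁ * (L₁ / 2)) else 0))
              (fun y => c₂ * w₂ y + (if y = v then -(c₂ * (L₂ / 2)) else 0)) (Sum.inl cc))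
          = c₁ * n₁ + ((G₂.dist v b : ℝ) + 1) * (c₁ * L₁ - c₁ * (L₁ / 2))
              + (G₁.dist u u : ℝ) * (-(c₁ * (L₁ / 2))) := by
        have e1 : ∀ cc : V₁, ((bridgeGraph G₁ G₂ u v).dist (Sum.inr b) (Sum.inl cc) : ℝ)
              * (Sum.elim
                (fun x => c₁ * w₁ x + (if x = u then -(c₁ * (L₁ / 2)) else 0))
                (fun y => c₂ * w₂ y + (if y = v then -(c₂ * (L₂ / 2)) else 0)) (Sum.inl cc))
            = ((G₂.dist v b : ℝ) + 1)
                * (c₁ * w₁ cc + (if cc = u then -(c₁ * (L₁ / 2)) else 0))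
              + (c₁ * ((G₁.dist u cc : ℝ) * w₁ cc)
                + (G₁.dist u cc : ℝ) * (if cc = u then -(c₁ * (L₁ / 2)) else 0)) := by
          intro cc
          rw [bridge_dist_rl hG₁ hG₂, Sum.elim_inl, SimpleGraph.dist_comm (u := cc)]
          push_cast
          ring
        rw [Finset.sum_congr rfl fun cc _ => e1 cc, Finset.sum_add_distrib,
          ← Finset.mul_sum, hsum1, Finset.sum_add_distrib, ← Finset.mul_sum, hA u]
        have : ∑ cc : V₁, (G₁.dist u cc : ℝ) * (if cc = u then -(c₁ * (L₁ / 2)) else 0)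
            = (G₁.dist u u : ℝ) * (-(c₁ * (L₁ / 2))) := by
          simp [mul_ite, mul_zero, Finset.sum_ite_eq']
        rw [this]
        ring
      have S2 : ∑ cc : V₂, ((bridgeGraph G₁ G₂ u v).dist (Sum.inr b) (Sum.inr cc) : ℝ)
            * (Sum.elim
              (fun x => c₁ * w₁ x + (if x = u then -(c₁ * (L₁ / 2)) else 0))
              (fun y => c₂ * w₂ y + (if y = v then -(c₂ * (L₂ / 2)) else 0)) (Sum.inr cc))
          = c₂ * n₂ + (G₂.dist v b : ℝ) * (-(c₂ * (L₂ / 2))) := by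
        have e2 : ∀ cc : V₂, ((bridgeGraph G₁ G₂ u v).dist (Sum.inr b) (Sum.inr cc) : ℝ)
              * (Sum.elim
                (fun x => c₁ * w₁ x + (if x = u then -(c₁ * (L₁ / 2)) else 0))
                (fun y => c₂ * w₂ y + (if y = v then -(c₂ * (L₂ / 2)) else 0)) (Sum.inr cc))
            = c₂ * ((G₂.dist b cc : ℝ) * w₂ cc)
              + (G₂.dist b cc : ℝ) * (if cc = v then -(c₂ * (L₂ / 2)) else 0) := by
          intro cc
          rw [bridge_dist_rr hG₂, Sum.elim_inr]
          ring
        rw [Finset.sum_congr rfl fun cc _ => e2 cc, Finset.sum_add_distrib,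
          ← Finset.mul_sum, hB b]
        have : ∑ cc : V₂, (G₂.dist b cc : ℝ) * (if cc = v then -(c₂ * (L₂ / 2)) else 0)
            = (G₂.dist v b : ℝ) * (-(c₂ * (L₂ / 2))) := by
          simp [mul_ite, mul_zero, Finset.sum_ite_eq', SimpleGraph.dist_comm (u := b)]
        rw [this]
      rw [S1, S2, SimpleGraph.dist_self]
      push_cast
      linear_combination hfin + ((1 + (G₂.dist v b : ℝ)) / 2) * hc
  · simp only [Sum.elim_inl, if_true, eq_self_iff_true]
    ring
  · simp only [Sum.elim_inr, if_true, eq_self_iff_true]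
    ring
  · simp only [Sum.elim_inl]
    rw [if_neg hx]
    ring
  · simp only [Sum.elim_inr]
    rw [if_neg hy]
    ring
end

section
/- Let G' be a finite connected simple graph on n vertices with constant curvature K > 0 (i.e., its distance matrix D' satisfies D'(K·𝟏) = n·𝟏). Let G be the graph obtained by adding an edge between two disjoint copies of G', joining a vertex u in the first copy to a vertex v in the second copy. Then G has a curvature w (D_G w = 2n·𝟏) whose value is (2−n)·2K/(4+K) at u and at v, and 4K/(4+K) at every other vertex. -/
section BridgeDist

variable {V : Type*} {G : SimpleGraph V} {u v : V}

private lemma bridge_adj_inl {a b : V} (h : G.Adj a b) :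
    (bridgeGraph G G u v).Adj (Sum.inl a) (Sum.inl b) := by
  rw [bridgeGraph, SimpleGraph.fromRel_adj]
  exact ⟨by simp [h.ne], Or.inl (Or.inl ⟨a, b, rfl, rfl, h⟩)⟩

private lemma bridge_adj_inr {a b : V} (h : G.Adj a b) :
    (bridgeGraph G G u v).Adj (Sum.inr a) (Sum.inr b) := by
  rw [bridgeGraph, SimpleGraph.fromRel_adj]
  exact ⟨by simp [h.ne], Or.inl (Or.inr (Or.inl ⟨a, b, rfl, rfl, h⟩))⟩

private lemma bridge_adj_uv :
    (bridgeGraph G G u v).Adj (Sum.inl u) (Sum.inr v) := by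
  rw [bridgeGraph, SimpleGraph.fromRel_adj]
  exact ⟨by simp, Or.inl (Or.inr (Or.inr ⟨rfl, rfl⟩))⟩

/-- The left embedding as a graph hom. -/
private def brHomL (G : SimpleGraph V) (u v : V) : G →g bridgeGraph G G u v where
  toFun := Sum.inl
  map_rel' := fun h => bridge_adj_inl h

private def brHomR (G : SimpleGraph V) (u v : V) : G →g bridgeGraph G G u v where
  toFun := Sum.inr
  map_rel' := fun h => bridge_adj_inr h

/-- The candidate distance function on the bridged graph. -/
private noncomputable def brDelta (G : SimpleGraph V) (u v : V) : V ⊕ V → V ⊕ V → ℕ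
  | Sum.inl a, Sum.inl b => G.dist a b
  | Sum.inl a, Sum.inr b => G.dist a u + 1 + G.dist v b
  | Sum.inr a, Sum.inl b => G.dist b u + 1 + G.dist v a
  | Sum.inr a, Sum.inr b => G.dist a b

private lemma adj_dist_le_one {a b : V} (h : G.Adj a b) : G.dist a b ≤ 1 := by
  simpa using SimpleGraph.dist_le h.toWalk

private lemma dist_lipL (hc : G.Connected) {a b : V} (h : G.Adj a b) (c : V) :
    G.dist a c ≤ G.dist b c + 1 := by
  have h1 := hc.dist_triangle (u := a) (v := b) (w := c)
  have h2 := adj_dist_le_one h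
  omega

private lemma dist_lipR (hc : G.Connected) {a b : V} (h : G.Adj a b) (c : V) :
    G.dist c a ≤ G.dist c b + 1 := by
  have h1 := hc.dist_triangle (u := c) (v := b) (w := a)
  have h2 := adj_dist_le_one h.symm
  have h3 := SimpleGraph.dist_comm (G := G) (u := b) (v := a)
  omega

private lemma brDelta_step (hc : G.Connected) {x y : V ⊕ V}
    (h : (bridgeGraph G G u v).Adj x y) (z : V ⊕ V) :
    brDelta G u v x z ≤ brDelta G u v y z + 1 := by
  have comm := fun a b => SimpleGraph.dist_comm (G := G) (u := a) (v := b)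
  rw [bridgeGraph, SimpleGraph.fromRel_adj] at h
  obtain ⟨-, h | h⟩ := h <;>
    rcases h with ⟨a, b, rfl, rfl, hab⟩ | ⟨a, b, rfl, rfl, hab⟩ | ⟨rfl, rfl⟩ <;>
    rcases z with c | c <;>
    simp only [brDelta, SimpleGraph.dist_self] <;>
    [ exact dist_lipL hc hab c;
      (have := dist_lipL hc hab u; omega);
      (have := dist_lipR hc hab v; omega);
      exact dist_lipL hc hab c;
      (have := comm u c; omega);
      omega;
      exact dist_lipL hc hab.symm c;
      (have := dist_lipL hc hab.symm u; omega);
      (have := dist_lipR hc hab.symm v; omega);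
      exact dist_lipL hc hab.symm c;
      (have := comm c u; omega);
      omega ]

private lemma brDelta_le_length (hc : G.Connected) {x y : V ⊕ V}
    (p : (bridgeGraph G G u v).Walk x y) :
    brDelta G u v x y ≤ p.length := by
  induction p with
  | nil =>
    rename_i a
    rcases a with a | a <;> simp [brDelta, SimpleGraph.dist_self]
  | cons h p ih =>
    simp only [SimpleGraph.Walk.length_cons]
    exact (brDelta_step hc h _).trans (by omega)

private lemma brDist_eq (hc : G.Connected) (x y : V ⊕ V) :
    (bridgeGraph G G u v).dist x y = brDelta G u v x y := by
  have upper : (bridgeGraph G G u v).dist x y ≤ brDelta G u v x y ∧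
      (bridgeGraph G G u v).Reachable x y := by
    rcases x with a | a <;> rcases y with b | b
    · obtain ⟨p, hp⟩ := hc.exists_walk_length_eq_dist a b
      have := SimpleGraph.dist_le (p.map (brHomL G u v))
      rw [SimpleGraph.Walk.length_map, hp] at this
      exact ⟨this, ⟨p.map (brHomL G u v)⟩⟩
    · obtain ⟨p₁, hp₁⟩ := hc.exists_walk_length_eq_dist a u
      obtain ⟨p₂, hp₂⟩ := hc.exists_walk_length_eq_dist v b
      let q := (p₁.map (brHomL G u v)).append
        (SimpleGraph.Walk.cons bridge_adj_uv (p₂.map (brHomR G u v)))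
      have hlen : q.length = G.dist a u + 1 + G.dist v b := by
        show ((p₁.map (brHomL G u v)).append
          (SimpleGraph.Walk.cons bridge_adj_uv (p₂.map (brHomR G u v)))).length = _
        rw [SimpleGraph.Walk.length_append]
        erw [SimpleGraph.Walk.length_cons]
        erw [SimpleGraph.Walk.length_map, SimpleGraph.Walk.length_map]
        rw [hp₁, hp₂]
        omega
      have := SimpleGraph.dist_le q
      rw [hlen] at this
      exact ⟨this, ⟨q⟩⟩
    · obtain ⟨p₁, hp₁⟩ := hc.exists_walk_length_eq_dist b u
      obtain ⟨p₂, hp₂⟩ := hc.exists_walk_length_eq_dist v a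
      let q := (p₁.map (brHomL G u v)).append
        (SimpleGraph.Walk.cons bridge_adj_uv (p₂.map (brHomR G u v)))
      have hlen : q.length = G.dist b u + 1 + G.dist v a := by
        show ((p₁.map (brHomL G u v)).append
          (SimpleGraph.Walk.cons bridge_adj_uv (p₂.map (brHomR G u v)))).length = _
        rw [SimpleGraph.Walk.length_append]
        erw [SimpleGraph.Walk.length_cons]
        erw [SimpleGraph.Walk.length_map, SimpleGraph.Walk.length_map]
        rw [hp₁, hp₂]
        omega
      have := SimpleGraph.dist_le q.reverse
      rw [SimpleGraph.Walk.length_reverse, hlen] at this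
      exact ⟨this, ⟨q.reverse⟩⟩
    · obtain ⟨p, hp⟩ := hc.exists_walk_length_eq_dist a b
      have := SimpleGraph.dist_le (p.map (brHomR G u v))
      rw [SimpleGraph.Walk.length_map, hp] at this
      exact ⟨this, ⟨p.map (brHomR G u v)⟩⟩
  refine le_antisymm upper.1 ?_
  obtain ⟨q, hq⟩ := upper.2.exists_walk_length_eq_dist
  rw [← hq]
  exact brDelta_le_length hc q

end BridgeDist

private lemma sum_ite_weight {V : Type*} [Fintype V] [DecidableEq V]
    (f : V → ℝ) (p : V) (cc dd : ℝ) :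
    ∑ b, f b * (if b = p then dd else cc) = (∑ b, f b) * cc + f p * (dd - cc) := by
  have : ∀ b, f b * (if b = p then dd else cc)
      = f b * cc + (if b = p then f b * (dd - cc) else 0) := by
    intro b; split_ifs <;> ring
  simp_rw [this, Finset.sum_add_distrib, Finset.sum_ite_eq' Finset.univ p
    (fun b => f b * (dd - cc))]
  simp [Finset.sum_mul]

/-- If `G'` is a finite connected graph on `n` vertices with constant
curvature `K > 0`, then the graph obtained by adding an edge between two disjoint
copies of `G'` (joining `u` in the first copy to `v` in the second copy) has a
curvature whose value is `(2−n)·2K/(4+K)` at `u` and `v` and `4K/(4+K)` elsewhere. -/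
theorem stmt_7 {V : Type*} [Fintype V] (G' : SimpleGraph V) (hG' : G'.Connected)
    (K : ℝ) (hK : 0 < K)
    (hcurv : (Matrix.of fun a b => ((G'.dist a b : ℕ) : ℝ)).mulVec (fun _ => K)
      = fun _ => (Fintype.card V : ℝ))
    (u v : V) :
    ∃ w : V ⊕ V → ℝ,
      (Matrix.of fun a b => ((bridgeGraph G' G' u v).dist a b : ℝ)).mulVec w
          = (fun _ => 2 * (Fintype.card V : ℝ)) ∧
        w (Sum.inl u) = (2 - (Fintype.card V : ℝ)) * (2 * K) / (4 + K) ∧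
        w (Sum.inr v) = (2 - (Fintype.card V : ℝ)) * (2 * K) / (4 + K) ∧
        ∀ x, x ≠ Sum.inl u → x ≠ Sum.inr v → w x = 4 * K / (4 + K) := by
  classical
  set n : ℝ := (Fintype.card V : ℝ) with hn
  have hKne : K ≠ 0 := ne_of_gt hK
  have h4K : (4 : ℝ) + K ≠ 0 := by positivity
  set cc : ℝ := 4 * K / (4 + K) with hcc
  set dd : ℝ := (2 - n) * (2 * K) / (4 + K) with hdd
  refine ⟨Sum.elim (fun x => if x = u then dd else cc) (fun x => if x = v then dd else cc),
    ?_, by simp, by simp, ?_⟩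
  swap
  · rintro (x | x) hx1 hx2 <;> simp_all [Sum.elim_inl, Sum.elim_inr]
  -- The curvature row equation from the hypothesis.
  have hsum : ∀ a : V, (∑ b, (G'.dist a b : ℝ)) = n / K := by
    intro a
    have := congrFun hcurv a
    simp only [Matrix.mulVec, dotProduct, Matrix.of_apply] at this
    rw [eq_div_iff hKne, Finset.sum_mul]
    exact this
  have hsum' : ∀ a : V, (∑ b, (G'.dist b a : ℝ)) = n / K := by
    intro a
    rw [← hsum a]
    exact Finset.sum_congr rfl fun b _ => by rw [SimpleGraph.dist_comm]
  funext x
  simp only [Matrix.mulVec, dotProduct, Matrix.of_apply, Fintype.sum_sum_type]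
  rcases x with a | a
  · have e1 : ∀ b, ((bridgeGraph G' G' u v).dist (Sum.inl a) (Sum.inl b) : ℝ)
        = (G'.dist a b : ℝ) := fun b => by rw [brDist_eq hG']; simp only [brDelta]
    have e2 : ∀ b, ((bridgeGraph G' G' u v).dist (Sum.inl a) (Sum.inr b) : ℝ)
        = (G'.dist a u : ℝ) + 1 + (G'.dist v b : ℝ) := fun b => by
      rw [brDist_eq hG']; simp only [brDelta]; push_cast; ring
    simp only [Sum.elim_inl, Sum.elim_inr]
    have hsplit1 : ∑ b : V, ((G'.dist a u : ℝ) + 1 + (G'.dist v b : ℝ))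
        = n * (G'.dist a u : ℝ) + n + n / K := by
      rw [Finset.sum_add_distrib, Finset.sum_add_distrib, hsum v, Finset.sum_const,
        Finset.sum_const, Finset.card_univ, nsmul_eq_mul, nsmul_eq_mul, hn]
      ring
    simp only [e1, e2]
    rw [sum_ite_weight (fun b => (G'.dist a b : ℝ)) u cc dd,
      sum_ite_weight (fun b => (G'.dist a u : ℝ) + 1 + (G'.dist v b : ℝ)) v cc dd,
      hsum a, hsplit1, SimpleGraph.dist_self]
    rw [hcc, hdd, hn]
    push_cast
    field_simp
    ring
  · have e1 : ∀ b, ((bridgeGraph G' G' u v).dist (Sum.inr a) (Sum.inl b) : ℝ)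
        = (G'.dist b u : ℝ) + 1 + (G'.dist v a : ℝ) := fun b => by
      rw [brDist_eq hG']; simp only [brDelta]; push_cast; ring
    have e2 : ∀ b, ((bridgeGraph G' G' u v).dist (Sum.inr a) (Sum.inr b) : ℝ)
        = (G'.dist a b : ℝ) := fun b => by rw [brDist_eq hG']; simp only [brDelta]
    simp only [Sum.elim_inl, Sum.elim_inr]
    have hsplit2 : ∑ b : V, ((G'.dist b u : ℝ) + 1 + (G'.dist v a : ℝ))
        = n / K + n + n * (G'.dist v a : ℝ) := by
      rw [Finset.sum_add_distrib, Finset.sum_add_distrib, hsum' u, Finset.sum_const,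
        Finset.sum_const, Finset.card_univ, nsmul_eq_mul, nsmul_eq_mul, hn]
      ring
    simp only [e1, e2]
    rw [sum_ite_weight (fun b => (G'.dist b u : ℝ) + 1 + (G'.dist v a : ℝ)) u cc dd,
      sum_ite_weight (fun b => (G'.dist a b : ℝ)) v cc dd,
      hsum a, hsplit2, SimpleGraph.dist_self,
      SimpleGraph.dist_comm (G := G') (u := v) (v := a)]
    rw [hcc, hdd, hn]
    push_cast
    field_simp
    ring
end

section
/- Let G₁ and G₂ be finite connected simple graphs with n₁ and n₂ vertices, distance matrices D₁, D₂, and nonnegative curvatures w (D₁w = n₁·𝟏, w ≥ 0) and g (D₂g = n₂·𝟏, g ≥ 0). Let H be the graph obtained by merging G₁ and G₂ at a vertex, identifying u ∈ V(G₁) with v ∈ V(G₂). Then H has a curvature whose value at the merged vertex equals (‖g‖₁·w(u) − ‖w‖₁·(‖g‖₁ − g(v))) / (‖g‖₁·n₁ + ‖w‖₁·n₂) · (n₁+n₂−1), and which is nonnegative at all other vertices. -/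
/-- The graph obtained by merging `G₁` and `G₂` at a vertex: add an edge between
`u ∈ V(G₁)` and `v ∈ V(G₂)` and contract it, identifying `u` and `v`.  The merged
vertex is represented by `Sum.inl u`. -/
def mergeGraph {V₁ V₂ : Type*} (G₁ : SimpleGraph V₁) (G₂ : SimpleGraph V₂)
    (u : V₁) (v : V₂) : SimpleGraph (V₁ ⊕ {y : V₂ // y ≠ v}) :=
  SimpleGraph.fromRel (fun x y =>
    (∃ a b, x = Sum.inl a ∧ y = Sum.inl b ∧ G₁.Adj a b) ∨
    (∃ a b, x = Sum.inr a ∧ y = Sum.inr b ∧ G₂.Adj a.1 b.1) ∨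
    (∃ b, x = Sum.inl u ∧ y = Sum.inr b ∧ G₂.Adj v b.1))

namespace MergeAux
open SimpleGraph

variable {V₁ V₂ : Type*} {G₁ : SimpleGraph V₁} {G₂ : SimpleGraph V₂} {u : V₁} {v : V₂}

lemma adj_inl_inl {a b : V₁} :
    (mergeGraph G₁ G₂ u v).Adj (Sum.inl a) (Sum.inl b) ↔ G₁.Adj a b := by
  simp only [mergeGraph, SimpleGraph.fromRel_adj]
  constructor
  · rintro ⟨hne, (⟨a', b', ha, hb, h⟩ | ⟨a', b', ha, hb, h⟩ | ⟨b', ha, hb, h⟩) |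
      (⟨a', b', ha, hb, h⟩ | ⟨a', b', ha, hb, h⟩ | ⟨b', ha, hb, h⟩)⟩ <;>
      simp_all <;> exact h.symm
  · intro h
    exact ⟨by simpa using h.ne, Or.inl (Or.inl ⟨a, b, rfl, rfl, h⟩)⟩

lemma adj_inr_inr {a b : {y : V₂ // y ≠ v}} :
    (mergeGraph G₁ G₂ u v).Adj (Sum.inr a) (Sum.inr b) ↔ G₂.Adj a.1 b.1 := by
  simp only [mergeGraph, SimpleGraph.fromRel_adj]
  constructor
  · rintro ⟨hne, (⟨a', b', ha, hb, h⟩ | ⟨a', b', ha, hb, h⟩ | ⟨b', ha, hb, h⟩) |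
      (⟨a', b', ha, hb, h⟩ | ⟨a', b', ha, hb, h⟩ | ⟨b', ha, hb, h⟩)⟩ <;>
      simp_all <;> exact h.symm
  · intro h
    refine ⟨by simp [Subtype.ext_iff, h.ne], Or.inl (Or.inr (Or.inl ⟨a, b, rfl, rfl, h⟩))⟩

lemma adj_inl_inr {a : V₁} {b : {y : V₂ // y ≠ v}} :
    (mergeGraph G₁ G₂ u v).Adj (Sum.inl a) (Sum.inr b) ↔ a = u ∧ G₂.Adj v b.1 := by
  simp only [mergeGraph, SimpleGraph.fromRel_adj]
  constructor
  · rintro ⟨hne, (⟨a', b', ha, hb, h⟩ | ⟨a', b', ha, hb, h⟩ | ⟨b', ha, hb, h⟩) |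
      (⟨a', b', ha, hb, h⟩ | ⟨a', b', ha, hb, h⟩ | ⟨b', ha, hb, h⟩)⟩ <;> simp_all
  · rintro ⟨rfl, h⟩
    exact ⟨by simp, Or.inl (Or.inr (Or.inr ⟨b, rfl, rfl, h⟩))⟩

/-- projection to `V₁`. -/
def p1 (u : V₁) : (V₁ ⊕ {y : V₂ // y ≠ v}) → V₁ := Sum.elim id (fun _ => u)

/-- projection to `V₂`. -/
def p2 (v : V₂) : (V₁ ⊕ {y : V₂ // y ≠ v}) → V₂ := Sum.elim (fun _ => v) Subtype.val

lemma adj_step {x y : V₁ ⊕ {y : V₂ // y ≠ v}} (h : (mergeGraph G₁ G₂ u v).Adj x y) :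
    (G₁.Adj (p1 u x) (p1 u y) ∧ p2 v x = p2 v y) ∨
    (p1 u x = p1 u y ∧ G₂.Adj (p2 v x) (p2 v y)) := by
  match x, y with
  | Sum.inl a, Sum.inl b => exact Or.inl ⟨adj_inl_inl.mp h, rfl⟩
  | Sum.inr a, Sum.inr b => exact Or.inr ⟨rfl, adj_inr_inr.mp h⟩
  | Sum.inl a, Sum.inr b =>
    obtain ⟨rfl, h2⟩ := adj_inl_inr.mp h
    exact Or.inr ⟨rfl, h2⟩
  | Sum.inr b, Sum.inl a =>
    obtain ⟨rfl, h2⟩ := adj_inl_inr.mp h.symm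
    exact Or.inr ⟨rfl, h2.symm⟩

lemma walk_lower (hG₁ : G₁.Connected) (hG₂ : G₂.Connected)
    {x y : V₁ ⊕ {y : V₂ // y ≠ v}} (p : (mergeGraph G₁ G₂ u v).Walk x y) :
    G₁.dist (p1 u x) (p1 u y) + G₂.dist (p2 v x) (p2 v y) ≤ p.length := by
  induction p with
  | nil => simp
  | @cons x y' z h p ih =>
    rw [Walk.length_cons]
    rcases adj_step h with ⟨h1, h2⟩ | ⟨h1, h2⟩
    · have t1 : G₁.dist (p1 u x) (p1 u z) ≤ 1 + G₁.dist (p1 u y') (p1 u z) := by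
        calc G₁.dist (p1 u x) (p1 u z) ≤ G₁.dist (p1 u x) (p1 u y') + G₁.dist (p1 u y') (p1 u z) :=
          hG₁.dist_triangle
        _ ≤ 1 + G₁.dist (p1 u y') (p1 u z) := by
          have := (SimpleGraph.dist_eq_one_iff_adj (G := G₁)).mpr h1
          omega
      rw [h2]; omega
    · have t1 : G₂.dist (p2 v x) (p2 v z) ≤ 1 + G₂.dist (p2 v y') (p2 v z) := by
        calc G₂.dist (p2 v x) (p2 v z) ≤ G₂.dist (p2 v x) (p2 v y') + G₂.dist (p2 v y') (p2 v z) :=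
          hG₂.dist_triangle
        _ ≤ 1 + G₂.dist (p2 v y') (p2 v z) := by
          have := (SimpleGraph.dist_eq_one_iff_adj (G := G₂)).mpr h2
          omega
      rw [h1]; omega

/-- inclusion of `G₁` as a graph hom -/
def homL (G₁ : SimpleGraph V₁) (G₂ : SimpleGraph V₂) (u : V₁) (v : V₂) :
    G₁ →g mergeGraph G₁ G₂ u v where
  toFun := Sum.inl
  map_rel' := fun h => adj_inl_inl.mpr h

/-- the embedding map of `V₂` -/
def emb2 [DecidableEq V₂] (u : V₁) (v : V₂) (b : V₂) : V₁ ⊕ {y : V₂ // y ≠ v} :=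
  if h : b = v then Sum.inl u else Sum.inr ⟨b, h⟩

lemma emb2_v [DecidableEq V₂] : emb2 (V₁ := V₁) u v v = Sum.inl u := dif_pos rfl

lemma emb2_ne [DecidableEq V₂] {b : V₂} (h : b ≠ v) :
    emb2 (V₁ := V₁) u v b = Sum.inr ⟨b, h⟩ := dif_neg h

/-- inclusion of `G₂` as a graph hom -/
def homR [DecidableEq V₂] (G₁ : SimpleGraph V₁) (G₂ : SimpleGraph V₂) (u : V₁) (v : V₂) :
    G₂ →g mergeGraph G₁ G₂ u v where
  toFun := emb2 u v
  map_rel' := by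
    intro b c h
    unfold emb2
    by_cases hb : b = v <;> by_cases hc : c = v
    · exact absurd (hb ▸ hc ▸ h) (G₂.irrefl)
    · simp only [dif_pos hb, dif_neg hc]
      exact adj_inl_inr.mpr ⟨rfl, hb ▸ h⟩
    · simp only [dif_neg hb, dif_pos hc]
      exact (adj_inl_inr.mpr ⟨rfl, hc ▸ h.symm⟩).symm
    · simp only [dif_neg hb, dif_neg hc]
      exact adj_inr_inr.mpr h

variable [DecidableEq V₂]

lemma dist_le_of_walks (hG₁ : G₁.Connected) (hG₂ : G₂.Connected) (a : V₁)
    (b : {y : V₂ // y ≠ v}) :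
    ∃ q : (mergeGraph G₁ G₂ u v).Walk (Sum.inl a) (Sum.inr b),
      q.length = G₁.dist a u + G₂.dist v b.1 := by
  obtain ⟨p₁, hp₁⟩ := hG₁.exists_walk_length_eq_dist a u
  obtain ⟨p₂, hp₂⟩ := hG₂.exists_walk_length_eq_dist v b.1
  have e1 : (homL G₁ G₂ u v) u = Sum.inl u := rfl
  have e2 : (homR G₁ G₂ u v) v = Sum.inl u := emb2_v
  have e3 : (homR G₁ G₂ u v) b.1 = Sum.inr b := emb2_ne b.2
  refine ⟨((p₁.map (homL G₁ G₂ u v)).copy rfl e1).append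
    (((p₂.map (homR G₁ G₂ u v)).copy e2 e3)), ?_⟩
  refine (Walk.length_append _ _).trans ?_
  simp [hp₁, hp₂]
  exact (Walk.length_copy ..).trans ((Walk.length_map ..).trans hp₁)

lemma dist_inl_inl (hG₁ : G₁.Connected) (hG₂ : G₂.Connected) (a b : V₁) :
    (mergeGraph G₁ G₂ u v).dist (Sum.inl a) (Sum.inl b) = G₁.dist a b := by
  obtain ⟨p, hp⟩ := hG₁.exists_walk_length_eq_dist a b
  have upper := SimpleGraph.dist_le (p.map (homL G₁ G₂ u v))
  rw [Walk.length_map, hp] at upper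
  have ea : (homL G₁ G₂ u v) a = Sum.inl a := rfl
  have eb : (homL G₁ G₂ u v) b = Sum.inl b := rfl
  rw [ea, eb] at upper
  have hr : (mergeGraph G₁ G₂ u v).Reachable (Sum.inl a) (Sum.inl b) :=
    ⟨p.map (homL G₁ G₂ u v)⟩
  obtain ⟨q, hq⟩ := hr.exists_walk_length_eq_dist
  have lower := walk_lower hG₁ hG₂ q
  simp only [p1, p2, Sum.elim_inl, SimpleGraph.dist_self, add_zero, id_eq] at lower
  omega

lemma dist_inr_inr (hG₁ : G₁.Connected) (hG₂ : G₂.Connected) (a b : {y : V₂ // y ≠ v}) :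
    (mergeGraph G₁ G₂ u v).dist (Sum.inr a) (Sum.inr b) = G₂.dist a.1 b.1 := by
  obtain ⟨p, hp⟩ := hG₂.exists_walk_length_eq_dist a.1 b.1
  have e1 : (homR G₁ G₂ u v) a.1 = Sum.inr a := emb2_ne a.2
  have e2 : (homR G₁ G₂ u v) b.1 = Sum.inr b := emb2_ne b.2
  have upper := SimpleGraph.dist_le ((p.map (homR G₁ G₂ u v)).copy e1 e2)
  rw [Walk.length_copy, Walk.length_map, hp] at upper
  have hr : (mergeGraph G₁ G₂ u v).Reachable (Sum.inr a) (Sum.inr b) :=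
    ⟨(p.map (homR G₁ G₂ u v)).copy e1 e2⟩
  obtain ⟨q, hq⟩ := hr.exists_walk_length_eq_dist
  have lower := walk_lower hG₁ hG₂ q
  simp only [p1, p2, Sum.elim_inr, SimpleGraph.dist_self, zero_add, id_eq] at lower
  omega

lemma dist_inl_inr (hG₁ : G₁.Connected) (hG₂ : G₂.Connected) (a : V₁)
    (b : {y : V₂ // y ≠ v}) :
    (mergeGraph G₁ G₂ u v).dist (Sum.inl a) (Sum.inr b) = G₁.dist a u + G₂.dist v b.1 := by
  obtain ⟨q₀, hq₀⟩ := dist_le_of_walks (u := u) hG₁ hG₂ a b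
  have upper := SimpleGraph.dist_le q₀
  rw [hq₀] at upper
  have hr : (mergeGraph G₁ G₂ u v).Reachable (Sum.inl a) (Sum.inr b) := ⟨q₀⟩
  obtain ⟨q, hq⟩ := hr.exists_walk_length_eq_dist
  have lower := walk_lower hG₁ hG₂ q
  simp only [p1, p2, Sum.elim_inl, Sum.elim_inr, id_eq] at lower
  omega

end MergeAux

/-- If `G₁`, `G₂` have nonnegative curvatures `w` and `g`, then the graph
obtained by merging them at a vertex (identifying `u` with `v`) has a curvature whose
value at the merged vertex equals
`(‖g‖₁·w(u) − ‖w‖₁·(‖g‖₁ − g(v))) / (‖g‖₁·n₁ + ‖w‖₁·n₂) · (n₁+n₂−1)`, and which is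
nonnegative at all other vertices. -/
theorem stmt_9 {V₁ V₂ : Type*} [Fintype V₁] [Fintype V₂] [DecidableEq V₂]
    (G₁ : SimpleGraph V₁) (G₂ : SimpleGraph V₂)
    (hG₁ : G₁.Connected) (hG₂ : G₂.Connected)
    (D₁ : Matrix V₁ V₁ ℝ) (hD₁ : ∀ a b, D₁ a b = (G₁.dist a b : ℝ))
    (D₂ : Matrix V₂ V₂ ℝ) (hD₂ : ∀ a b, D₂ a b = (G₂.dist a b : ℝ))
    (w : V₁ → ℝ) (hw0 : ∀ i, 0 ≤ w i)
    (hw : D₁.mulVec w = fun _ => (Fintype.card V₁ : ℝ))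
    (g : V₂ → ℝ) (hg0 : ∀ i, 0 ≤ g i)
    (hg : D₂.mulVec g = fun _ => (Fintype.card V₂ : ℝ))
    (u : V₁) (v : V₂)
    (n₁ : ℝ) (hn₁ : n₁ = (Fintype.card V₁ : ℝ))
    (n₂ : ℝ) (hn₂ : n₂ = (Fintype.card V₂ : ℝ))
    (Lw : ℝ) (hLw : Lw = ∑ i, |w i|)
    (Lg : ℝ) (hLg : Lg = ∑ i, |g i|) :
    ∃ w' : V₁ ⊕ {y : V₂ // y ≠ v} → ℝ,
      (Matrix.of fun a b => ((mergeGraph G₁ G₂ u v).dist a b : ℝ)).mulVec w'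
          = (fun _ => n₁ + n₂ - 1) ∧
        w' (Sum.inl u)
          = (Lg * w u - Lw * (Lg - g v)) / (Lg * n₁ + Lw * n₂) * (n₁ + n₂ - 1) ∧
        ∀ x, x ≠ Sum.inl u → 0 ≤ w' x := by
  classical
  open MergeAux in
  -- basic sums from the curvature hypotheses
  have hwub : ∀ a : V₁, ∑ a', (G₁.dist a a' : ℝ) * w a' = n₁ := by
    intro a
    have := congrFun hw a
    simp only [Matrix.mulVec, dotProduct] at this
    simp only [hD₁] at this
    rw [this, hn₁]
  have hgub : ∀ b : V₂, ∑ c, (G₂.dist b c : ℝ) * g c = n₂ := by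
    intro b
    have := congrFun hg b
    simp only [Matrix.mulVec, dotProduct] at this
    simp only [hD₂] at this
    rw [this, hn₂]
  have hLw' : Lw = ∑ i, w i := by
    rw [hLw]; exact Finset.sum_congr rfl fun i _ => abs_of_nonneg (hw0 i)
  have hLg' : Lg = ∑ i, g i := by
    rw [hLg]; exact Finset.sum_congr rfl fun i _ => abs_of_nonneg (hg0 i)
  -- positivity facts
  have hV₁ : Nonempty V₁ := hG₁.nonempty
  have hV₂ : Nonempty V₂ := hG₂.nonempty
  have hn₁1 : (1 : ℝ) ≤ n₁ := by
    rw [hn₁]; exact_mod_cast Fintype.card_pos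
  have hn₂1 : (1 : ℝ) ≤ n₂ := by
    rw [hn₂]; exact_mod_cast Fintype.card_pos
  have hLwnn : 0 ≤ Lw := by
    rw [hLw]; exact Finset.sum_nonneg fun i _ => abs_nonneg _
  have hLgnn : 0 ≤ Lg := by
    rw [hLg]; exact Finset.sum_nonneg fun i _ => abs_nonneg _
  have hLwpos : 0 < Lw := by
    rcases hLwnn.lt_or_eq with h | h
    · exact h
    · exfalso
      have hz : ∀ i ∈ Finset.univ, w i = 0 := by
        have := (Finset.sum_eq_zero_iff_of_nonneg (fun i _ => hw0 i)).mp (by rw [← hLw', ← h])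
        exact this
      have := hwub (Classical.arbitrary V₁)
      simp only [hz _ (Finset.mem_univ _), mul_zero, Finset.sum_const_zero] at this
      linarith
  have hLgpos : 0 < Lg := by
    rcases hLgnn.lt_or_eq with h | h
    · exact h
    · exfalso
      have hz : ∀ i ∈ Finset.univ, g i = 0 := by
        have := (Finset.sum_eq_zero_iff_of_nonneg (fun i _ => hg0 i)).mp (by rw [← hLg', ← h])
        exact this
      have := hgub (Classical.arbitrary V₂)
      simp only [hz _ (Finset.mem_univ _), mul_zero, Finset.sum_const_zero] at this
      linarith
  set den : ℝ := Lg * n₁ + Lw * n₂ with hden_def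
  have hden : 0 < den := by positivity
  have hden' : den ≠ 0 := hden.ne'
  have hc1 : (0:ℝ) ≤ n₁ + n₂ - 1 := by linarith
  set α : ℝ := Lg * (n₁ + n₂ - 1) / den with hα_def
  set β : ℝ := Lw * (n₁ + n₂ - 1) / den with hβ_def
  have hα : 0 ≤ α := by positivity
  have hβ : 0 ≤ β := by positivity
  -- the candidate curvature
  set w' : V₁ ⊕ {y : V₂ // y ≠ v} → ℝ :=
    Sum.elim (fun a => α * w a + if a = u then -(β * (Lg - g v)) else 0)
      (fun b => β * g b.1) with hw'_def
  -- subtype sums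
  have hsub : ∀ f : V₂ → ℝ, ∑ b : {y : V₂ // y ≠ v}, f b.1 = (∑ b, f b) - f v := by
    intro f
    have h1 : ∑ b ∈ Finset.univ.erase v, f b = ∑ b : {y : V₂ // y ≠ v}, f b.1 :=
      Finset.sum_subtype _ (by simp) f
    have h2 := Finset.sum_erase_add Finset.univ f (Finset.mem_univ v)
    linarith
  have hgsub : ∑ b : {y : V₂ // y ≠ v}, g b.1 = Lg - g v := by
    rw [hsub, hLg']
  have hgdsub : ∀ b₀ : V₂, ∑ b : {y : V₂ // y ≠ v}, (G₂.dist b₀ b.1 : ℝ) * g b.1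
      = n₂ - (G₂.dist b₀ v : ℝ) * g v := by
    intro b₀
    rw [hsub fun b => (G₂.dist b₀ b : ℝ) * g b, hgub b₀]
  -- sums over V₁ against w'
  have hA : ∀ a : V₁, ∑ a', (G₁.dist a a' : ℝ) * w' (Sum.inl a')
      = α * n₁ - (G₁.dist a u : ℝ) * (β * (Lg - g v)) := by
    intro a
    simp only [hw'_def, Sum.elim_inl]
    rw [Finset.sum_congr rfl (fun a' _ => mul_add ((G₁.dist a a' : ℝ)) _ _),
      Finset.sum_add_distrib]
    have e1 : ∑ a', (G₁.dist a a' : ℝ) * (α * w a') = α * n₁ := by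
      rw [← hwub a, Finset.mul_sum]
      exact Finset.sum_congr rfl fun a' _ => by ring
    have e2 : ∑ a', (G₁.dist a a' : ℝ) * (if a' = u then -(β * (Lg - g v)) else 0)
        = -((G₁.dist a u : ℝ) * (β * (Lg - g v))) := by
      rw [Finset.sum_congr rfl (fun a' _ => by
        rw [mul_ite, mul_zero] :
          ∀ a' ∈ Finset.univ, (G₁.dist a a' : ℝ) * (if a' = u then -(β * (Lg - g v)) else 0)
            = if a' = u then (G₁.dist a a' : ℝ) * -(β * (Lg - g v)) else 0)]
      rw [Finset.sum_ite_eq' Finset.univ u fun a' => (G₁.dist a a' : ℝ) * -(β * (Lg - g v))]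
      simp [mul_neg]
    rw [e1, e2]; ring
  have hAsum : ∑ a', w' (Sum.inl a') = α * Lw - β * (Lg - g v) := by
    simp only [hw'_def, Sum.elim_inl]
    rw [Finset.sum_add_distrib, ← Finset.mul_sum, ← hLw']
    rw [Finset.sum_ite_eq' Finset.univ u fun _ => -(β * (Lg - g v))]
    simp; ring
  -- the key constant-sum computations
  have key : ∀ x, ∑ y, ((mergeGraph G₁ G₂ u v).dist x y : ℝ) * w' y = n₁ + n₂ - 1 := by
    have hconst : α * n₁ + β * n₂ = n₁ + n₂ - 1 := by
      rw [hα_def, hβ_def]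
      field_simp
      ring
    have hαβ : α * Lw - β * Lg = 0 := by
      rw [hα_def, hβ_def]
      field_simp
      ring
    intro x
    rw [Fintype.sum_sum_type]
    match x with
    | Sum.inl a =>
      have eB : ∑ b : {y : V₂ // y ≠ v},
          ((mergeGraph G₁ G₂ u v).dist (Sum.inl a) (Sum.inr b) : ℝ) * w' (Sum.inr b)
          = (G₁.dist a u : ℝ) * (β * (Lg - g v)) + β * n₂ := by
        simp only [dist_inl_inr hG₁ hG₂, hw'_def, Sum.elim_inr]
        push_cast
        have step : ∀ b : {y : V₂ // y ≠ v}, b ∈ Finset.univ →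
            ((G₁.dist a u : ℝ) + (G₂.dist v b.1 : ℝ)) * (β * g b.1)
              = ((G₁.dist a u : ℝ) * β) * g b.1 + β * ((G₂.dist v b.1 : ℝ) * g b.1) := by
          intro b _; ring
        rw [Finset.sum_congr rfl step, Finset.sum_add_distrib, ← Finset.mul_sum,
          ← Finset.mul_sum, hgsub, hgdsub v]
        simp [SimpleGraph.dist_self]
        ring
      have eA : ∑ a', ((mergeGraph G₁ G₂ u v).dist (Sum.inl a) (Sum.inl a') : ℝ)
            * w' (Sum.inl a')
          = α * n₁ - (G₁.dist a u : ℝ) * (β * (Lg - g v)) := by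
        simp only [dist_inl_inl hG₁ hG₂]
        exact hA a
      rw [eA, eB, ← hconst]; ring
    | Sum.inr b =>
      have hd : ∀ a' : V₁, ((mergeGraph G₁ G₂ u v).dist (Sum.inr b) (Sum.inl a') : ℝ)
          = (G₁.dist u a' : ℝ) + (G₂.dist v b.1 : ℝ) := by
        intro a'
        rw [SimpleGraph.dist_comm, dist_inl_inr hG₁ hG₂, SimpleGraph.dist_comm (u := a')]
        push_cast; ring
      have eA : ∑ a', ((mergeGraph G₁ G₂ u v).dist (Sum.inr b) (Sum.inl a') : ℝ)
            * w' (Sum.inl a')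
          = α * n₁ + (G₂.dist v b.1 : ℝ) * (α * Lw - β * (Lg - g v)) := by
        rw [Finset.sum_congr rfl (fun a' _ => by rw [hd a'])]
        rw [Finset.sum_congr rfl (fun a' _ => add_mul _ _ _), Finset.sum_add_distrib]
        have h2 : ∑ a', (G₂.dist v b.1 : ℝ) * w' (Sum.inl a')
            = (G₂.dist v b.1 : ℝ) * (α * Lw - β * (Lg - g v)) := by
          rw [← Finset.mul_sum, hAsum]
        rw [Finset.sum_congr rfl (fun a' _ => rfl), h2]
        have h1 := hA u
        simp only [SimpleGraph.dist_self, Nat.cast_zero, zero_mul, sub_zero] at h1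
        rw [h1]
      have eB : ∑ c : {y : V₂ // y ≠ v},
          ((mergeGraph G₁ G₂ u v).dist (Sum.inr b) (Sum.inr c) : ℝ) * w' (Sum.inr c)
          = β * (n₂ - (G₂.dist b.1 v : ℝ) * g v) := by
        simp only [dist_inr_inr hG₁ hG₂, hw'_def, Sum.elim_inr]
        have step : ∀ c : {y : V₂ // y ≠ v}, c ∈ Finset.univ →
            (G₂.dist b.1 c.1 : ℝ) * (β * g c.1) = β * ((G₂.dist b.1 c.1 : ℝ) * g c.1) := by
          intro c _; ring
        rw [Finset.sum_congr rfl step, ← Finset.mul_sum, hgdsub b.1]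
      rw [eA, eB]
      have hcomm : (G₂.dist b.1 v : ℝ) = (G₂.dist v b.1 : ℝ) := by
        rw [SimpleGraph.dist_comm]
      rw [hcomm, ← hconst]
      nlinarith [hαβ, sq_nonneg ((G₂.dist v b.1 : ℝ))]
  refine ⟨w', ?_, ?_, ?_⟩
  · funext x
    have := key x
    simp only [Matrix.mulVec, dotProduct, Matrix.of_apply] at *
    exact this
  · simp only [hw'_def, Sum.elim_inl, if_pos rfl, ↓reduceIte]
    rw [hα_def, hβ_def, hden_def]
    field_simp
    ring
  · intro x hx
    match x with
    | Sum.inl a =>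
      have ha : a ≠ u := fun h => hx (by rw [h])
      simp only [hw'_def, Sum.elim_inl, if_neg ha, add_zero]
      exact mul_nonneg hα (hw0 a)
    | Sum.inr b =>
      simp only [hw'_def, Sum.elim_inr]
      exact mul_nonneg hβ (hg0 b.1)
end

section
/- Let G₁ and G₂ be finite connected simple graphs with n₁ and n₂ vertices and distance matrices D₁, D₂, each admitting a nonnegative curvature (an entrywise nonnegative wᵢ with Dᵢwᵢ = nᵢ·𝟏). Let G be the graph obtained by adding an edge between a vertex of G₁ and a vertex of G₂, with distance matrix D_G. Then rank(D_G) = rank(D₁) + rank(D₂). -/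
namespace BridgeAux

variable {V₁ V₂ : Type*} (G₁ : SimpleGraph V₁) (G₂ : SimpleGraph V₂) (u : V₁) (v : V₂)

/-- the claimed distance function -/
noncomputable def bd : V₁ ⊕ V₂ → V₁ ⊕ V₂ → ℕ
  | Sum.inl a, Sum.inl b => G₁.dist a b
  | Sum.inl a, Sum.inr b => G₁.dist a u + 1 + G₂.dist v b
  | Sum.inr a, Sum.inl b => G₂.dist a v + 1 + G₁.dist u b
  | Sum.inr a, Sum.inr b => G₂.dist a b

lemma adj_inl {a b : V₁} (h : G₁.Adj a b) :
    (bridgeGraph G₁ G₂ u v).Adj (Sum.inl a) (Sum.inl b) := by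
  refine ⟨by simpa using h.ne, Or.inl (Or.inl ⟨a, b, rfl, rfl, h⟩)⟩

lemma adj_inr {a b : V₂} (h : G₂.Adj a b) :
    (bridgeGraph G₁ G₂ u v).Adj (Sum.inr a) (Sum.inr b) := by
  refine ⟨by simpa using h.ne, Or.inl (Or.inr (Or.inl ⟨a, b, rfl, rfl, h⟩))⟩

lemma adj_uv : (bridgeGraph G₁ G₂ u v).Adj (Sum.inl u) (Sum.inr v) := by
  refine ⟨by simp, Or.inl (Or.inr (Or.inr ⟨rfl, rfl⟩))⟩

def hom₁ : G₁ →g bridgeGraph G₁ G₂ u v := ⟨Sum.inl, fun h => adj_inl _ _ _ _ h⟩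
def hom₂ : G₂ →g bridgeGraph G₁ G₂ u v := ⟨Sum.inr, fun h => adj_inr _ _ _ _ h⟩

variable {G₁ G₂}

lemma bridge_connected (hG₁ : G₁.Connected) (hG₂ : G₂.Connected) :
    (bridgeGraph G₁ G₂ u v).Connected := by
  have h1 : ∀ a : V₁, (bridgeGraph G₁ G₂ u v).Reachable (Sum.inl a) (Sum.inl u) :=
    fun a => (hG₁ a u).map (hom₁ G₁ G₂ u v)
  have h2 : ∀ b : V₂, (bridgeGraph G₁ G₂ u v).Reachable (Sum.inr v) (Sum.inr b) :=
    fun b => (hG₂ v b).map (hom₂ G₁ G₂ u v)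
  have huv := (adj_uv G₁ G₂ u v).reachable
  rw [SimpleGraph.connected_iff]
  refine ⟨?_, ⟨Sum.inl u⟩⟩
  intro x y
  cases x with
  | inl a => cases y with
    | inl b => exact (hG₁ a b).map (hom₁ G₁ G₂ u v)
    | inr b => exact ((h1 a).trans huv).trans (h2 b)
  | inr a => cases y with
    | inl b => exact (((h2 a).symm.trans huv.symm).trans (h1 b).symm)
    | inr b => exact (hG₂ a b).map (hom₂ G₁ G₂ u v)

lemma dist_le_bd (hG₁ : G₁.Connected) (hG₂ : G₂.Connected) (x y : V₁ ⊕ V₂) :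
    (bridgeGraph G₁ G₂ u v).dist x y ≤ bd G₁ G₂ u v x y := by
  cases x with
  | inl a => cases y with
    | inl b =>
      obtain ⟨p, hp⟩ := hG₁.exists_walk_length_eq_dist a b
      simpa [bd, ← hp, hom₁] using SimpleGraph.dist_le (p.map (hom₁ G₁ G₂ u v))
    | inr b =>
      obtain ⟨p, hp⟩ := hG₁.exists_walk_length_eq_dist a u
      obtain ⟨q, hq⟩ := hG₂.exists_walk_length_eq_dist v b
      have := SimpleGraph.dist_le
        ((p.map (hom₁ G₁ G₂ u v)).append
          (SimpleGraph.Walk.cons (adj_uv G₁ G₂ u v) (q.map (hom₂ G₁ G₂ u v))))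
      simp only [SimpleGraph.Walk.length_append, SimpleGraph.Walk.length_cons,
        SimpleGraph.Walk.length_map, hp, hq] at this
      erw [SimpleGraph.Walk.length_cons, SimpleGraph.Walk.length_map, hq] at this
      simpa [bd, hom₁, hom₂] using this.trans (by omega)
  | inr a => cases y with
    | inl b =>
      obtain ⟨p, hp⟩ := hG₂.exists_walk_length_eq_dist a v
      obtain ⟨q, hq⟩ := hG₁.exists_walk_length_eq_dist u b
      obtain ⟨p', hp'⟩ := hG₂.exists_walk_length_eq_dist v a
      obtain ⟨q', hq'⟩ := hG₁.exists_walk_length_eq_dist b u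
      rw [SimpleGraph.dist_comm]
      have := SimpleGraph.dist_le
        ((q'.map (hom₁ G₁ G₂ u v)).append
          (SimpleGraph.Walk.cons (adj_uv G₁ G₂ u v) (p'.map (hom₂ G₁ G₂ u v))))
      simp only [SimpleGraph.Walk.length_append, SimpleGraph.Walk.length_cons,
        SimpleGraph.Walk.length_map, hp', hq'] at this
      erw [SimpleGraph.Walk.length_cons, SimpleGraph.Walk.length_map, hp'] at this
      have h1 : G₁.dist b u = G₁.dist u b := SimpleGraph.dist_comm
      have h2 : G₂.dist v a = G₂.dist a v := SimpleGraph.dist_comm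
      simpa [bd, hom₁, hom₂] using this.trans (by omega)
    | inr b =>
      obtain ⟨p, hp⟩ := hG₂.exists_walk_length_eq_dist a b
      simpa [bd, ← hp, hom₂] using SimpleGraph.dist_le (p.map (hom₂ G₁ G₂ u v))

lemma adj_dist_le_one {V : Type*} {G : SimpleGraph V} {a b : V} (h : G.Adj a b) :
    G.dist a b ≤ 1 := by
  simpa using SimpleGraph.dist_le h.toWalk

lemma bd_step (hG₁ : G₁.Connected) (hG₂ : G₂.Connected) {x w : V₁ ⊕ V₂}
    (h : (bridgeGraph G₁ G₂ u v).Adj x w) (y : V₁ ⊕ V₂) :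
    bd G₁ G₂ u v x y ≤ bd G₁ G₂ u v w y + 1 := by
  rw [bridgeGraph, SimpleGraph.fromRel_adj] at h
  obtain ⟨hne, h | h⟩ := h <;>
  · rcases h with ⟨a, b, rfl, rfl, hab⟩ | ⟨a, b, rfl, rfl, hab⟩ | ⟨rfl, rfl⟩
    · -- inl-inl case
      have h1 := adj_dist_le_one hab
      cases y with
      | inl c =>
        have h2 := hG₁.dist_triangle (v := b) (u := a) (w := c)
        have h3 := hG₁.dist_triangle (v := a) (u := b) (w := c)
        have h4 : G₁.dist a b = G₁.dist b a := SimpleGraph.dist_comm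
        simp only [bd]; omega
      | inr c =>
        have h2 := hG₁.dist_triangle (v := b) (u := a) (w := u)
        have h3 := hG₁.dist_triangle (v := a) (u := b) (w := u)
        have h4 : G₁.dist a b = G₁.dist b a := SimpleGraph.dist_comm
        simp only [bd]; omega
    · -- inr-inr case
      have h1 := adj_dist_le_one hab
      cases y with
      | inl c =>
        have h2 := hG₂.dist_triangle (v := b) (u := a) (w := v)
        have h3 := hG₂.dist_triangle (v := a) (u := b) (w := v)
        have h4 : G₂.dist a b = G₂.dist b a := SimpleGraph.dist_comm
        simp only [bd]; omega
      | inr c =>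
        have h2 := hG₂.dist_triangle (v := b) (u := a) (w := c)
        have h3 := hG₂.dist_triangle (v := a) (u := b) (w := c)
        have h4 : G₂.dist a b = G₂.dist b a := SimpleGraph.dist_comm
        simp only [bd]; omega
    · -- bridge case
      have h5 : G₁.dist u u = 0 := SimpleGraph.dist_self
      have h6 : G₂.dist v v = 0 := SimpleGraph.dist_self
      cases y with
      | inl c => simp only [bd]; omega
      | inr c => simp only [bd]; omega

lemma bd_step' (hG₁ : G₁.Connected) (hG₂ : G₂.Connected) {x w : V₁ ⊕ V₂}
    (h : (bridgeGraph G₁ G₂ u v).Adj x w) (y : V₁ ⊕ V₂) :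
    bd G₁ G₂ u v x y ≤ bd G₁ G₂ u v w y + 1 :=
  bd_step u v hG₁ hG₂ h y

lemma bd_le_length (hG₁ : G₁.Connected) (hG₂ : G₂.Connected) {x y : V₁ ⊕ V₂}
    (p : (bridgeGraph G₁ G₂ u v).Walk x y) : bd G₁ G₂ u v x y ≤ p.length := by
  induction p with
  | @nil x =>
    cases x with
    | inl a => simp [bd, SimpleGraph.dist_self]
    | inr a => simp [bd, SimpleGraph.dist_self]
  | @cons x z yy h q ih =>
    have h1 := bd_step u v hG₁ hG₂ h yy
    simp only [SimpleGraph.Walk.length_cons]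
    omega

lemma bridge_dist_eq (hG₁ : G₁.Connected) (hG₂ : G₂.Connected) (x y : V₁ ⊕ V₂) :
    (bridgeGraph G₁ G₂ u v).dist x y = bd G₁ G₂ u v x y := by
  refine le_antisymm (dist_le_bd u v hG₁ hG₂ x y) ?_
  obtain ⟨p, hp⟩ := (bridge_connected u v hG₁ hG₂).exists_walk_length_eq_dist x y
  rw [← hp]
  exact bd_le_length u v hG₁ hG₂ p

end BridgeAux

set_option linter.unusedSectionVars false
namespace BridgeAux
open Matrix

variable {m n k : Type*} [Fintype m] [Fintype n] [Fintype k]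

lemma mul_vmv (M : Matrix m n ℝ) (x : n → ℝ) (y : k → ℝ) :
    M * vecMulVec x y = vecMulVec (M.mulVec x) y := by
  ext i j
  simp [Matrix.mul_apply, vecMulVec_apply, Matrix.mulVec, dotProduct,
    Finset.sum_mul, mul_assoc]

lemma vmv_mul (x : m → ℝ) (y : n → ℝ) (M : Matrix n k ℝ) :
    vecMulVec x y * M = vecMulVec x (M.vecMul y) := by
  ext i j
  simp [Matrix.mul_apply, vecMulVec_apply, Matrix.vecMul, dotProduct,
    Finset.mul_sum, mul_assoc]

lemma vmv_mul_vmv (x : m → ℝ) (y : n → ℝ) (x' : n → ℝ) (y' : k → ℝ) :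
    vecMulVec x y * vecMulVec x' y' = (y ⬝ᵥ x') • vecMulVec x y' := by
  ext i j
  simp [Matrix.mul_apply, vecMulVec_apply, dotProduct, Finset.sum_mul,
    Finset.mul_sum]
  exact Finset.sum_congr rfl fun a _ => by ring

lemma vmv_add_right (x : m → ℝ) (y z : n → ℝ) :
    vecMulVec x (y + z) = vecMulVec x y + vecMulVec x z := by
  ext i j; simp [vecMulVec_apply, mul_add]

lemma vmv_add_left (x y : m → ℝ) (z : n → ℝ) :
    vecMulVec (x + y) z = vecMulVec x z + vecMulVec y z := by
  ext i j; simp [vecMulVec_apply, add_mul]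

lemma vmv_smul_right (x : m → ℝ) (c : ℝ) (y : n → ℝ) :
    vecMulVec x (c • y) = c • vecMulVec x y := by
  ext i j; simp [vecMulVec_apply]; ring

lemma vmv_smul_left (c : ℝ) (x : m → ℝ) (y : n → ℝ) :
    vecMulVec (c • x) y = c • vecMulVec x y := by
  ext i j; simp [vecMulVec_apply]; ring

lemma vmv_transpose (x : m → ℝ) (y : n → ℝ) :
    (vecMulVec x y)ᵀ = vecMulVec y x := by
  ext i j; simp [vecMulVec_apply, mul_comm]

/-- invertibility of identity minus a rank-two perturbation -/
lemma isUnit_one_sub_sub [DecidableEq n] (p q r t : n → ℝ)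
    (hΔ : (1 - q ⬝ᵥ p) * (1 - t ⬝ᵥ r) - (q ⬝ᵥ r) * (t ⬝ᵥ p) ≠ 0) :
    IsUnit (1 - vecMulVec p q - vecMulVec r t) := by
  classical
  set a := q ⬝ᵥ p with ha
  set b := q ⬝ᵥ r with hb
  set c := t ⬝ᵥ p with hc
  set e := t ⬝ᵥ r with he
  set Δ := (1 - a) * (1 - e) - b * c with hΔdef
  set x : n → ℝ := Δ⁻¹ • ((1 - e) • q + b • t) with hx
  set y : n → ℝ := Δ⁻¹ • (c • q + (1 - a) • t) with hy
  set W : Matrix n n ℝ := 1 + vecMulVec p x + vecMulVec r y with hW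
  have key : (1 - vecMulVec p q - vecMulVec r t) * W = 1 := by
    have expand : (1 - vecMulVec p q - vecMulVec r t) * W =
        1 + vecMulVec p (x - (q + a • x + b • y)) + vecMulVec r (y - (t + c • x + e • y)) := by
      simp only [hW, sub_mul, one_mul, mul_add, mul_one, vmv_mul_vmv, ← ha, ← hb, ← hc, ← he]
      have hsx : x - (q + a • x + b • y) = (x - q) - a • x - b • y := by abel
      have hsy : y - (t + c • x + e • y) = (y - t) - c • x - e • y := by abel
      rw [hsx, hsy]
      simp only [vmv_add_right, vmv_smul_right, vecMulVec, sub_eq_add_neg]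
      ext i j
      simp [vecMulVec_apply, Matrix.add_apply, Matrix.neg_apply, Matrix.smul_apply]
      ring
    have hxeq : x - (q + a • x + b • y) = 0 := by
      funext i
      simp only [hx, hy, Pi.sub_apply, Pi.add_apply, Pi.smul_apply, smul_eq_mul]
      field_simp
      rw [Pi.zero_apply, mul_zero, hΔdef]
      ring
    have hyeq : y - (t + c • x + e • y) = 0 := by
      funext i
      simp only [hx, hy, Pi.sub_apply, Pi.add_apply, Pi.smul_apply, smul_eq_mul]
      field_simp
      rw [Pi.zero_apply, mul_zero, hΔdef]
      ring
    rw [expand, hxeq, hyeq]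
    simp [vecMulVec]
    ext i j; simp [vecMulVec_apply]
  have key2 : W * (1 - vecMulVec p q - vecMulVec r t) = 1 := mul_eq_one_comm.mp key
  exact ⟨⟨_, W, key, key2⟩, rfl⟩

/-- rank of a block diagonal matrix -/
lemma rank_blockDiag (A : Matrix m m ℝ) (B : Matrix n n ℝ) :
    (Matrix.fromBlocks A 0 0 B).rank = A.rank + B.rank := by
  classical
  let e := LinearEquiv.sumArrowLequivProdArrow m n ℝ ℝ
  have key : ∀ x : (m ⊕ n) → ℝ, (Matrix.fromBlocks A 0 0 B).mulVec x =
      Sum.elim (A.mulVec (x ∘ Sum.inl)) (B.mulVec (x ∘ Sum.inr)) := by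
    intro x
    rw [Matrix.fromBlocks_mulVec]
    simp
  have hmap : (LinearMap.range (Matrix.fromBlocks A 0 0 B).mulVecLin).map e.toLinearMap =
      (LinearMap.range A.mulVecLin).prod (LinearMap.range B.mulVecLin) := by
    ext y
    simp only [Submodule.mem_map, LinearMap.mem_range, Submodule.mem_prod]
    constructor
    · rintro ⟨-, ⟨x, rfl⟩, rfl⟩
      refine ⟨⟨x ∘ Sum.inl, ?_⟩, ⟨x ∘ Sum.inr, ?_⟩⟩ <;>
        simp [Matrix.mulVecLin_apply, key, e, LinearEquiv.sumArrowLequivProdArrow,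
          Equiv.sumArrowEquivProdArrow]
    · rintro ⟨⟨x₁, h₁⟩, ⟨x₂, h₂⟩⟩
      refine ⟨(Matrix.fromBlocks A 0 0 B).mulVecLin (Sum.elim x₁ x₂), ⟨_, rfl⟩, ?_⟩
      have : (Matrix.fromBlocks A 0 0 B).mulVecLin (Sum.elim x₁ x₂) =
          Sum.elim (A.mulVec x₁) (B.mulVec x₂) := by
        rw [Matrix.mulVecLin_apply, key]
        congr 1
      rw [this]
      apply Prod.ext
      · simpa [e, LinearEquiv.sumArrowLequivProdArrow, Equiv.sumArrowEquivProdArrow,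
          Matrix.mulVecLin_apply] using h₁
      · simpa [e, LinearEquiv.sumArrowLequivProdArrow, Equiv.sumArrowEquivProdArrow,
          Matrix.mulVecLin_apply] using h₂
  have prodEquiv : ∀ (p : Submodule ℝ (m → ℝ)) (q : Submodule ℝ (n → ℝ)),
      Module.finrank ℝ (p.prod q) = Module.finrank ℝ p + Module.finrank ℝ q := by
    intro p q
    have eq : (p.prod q) ≃ₗ[ℝ] (p × q) :=
      { toFun := fun z => (⟨z.val.1, z.prop.1⟩, ⟨z.val.2, z.prop.2⟩)
        invFun := fun z => ⟨(z.1.val, z.2.val), ⟨z.1.prop, z.2.prop⟩⟩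
        left_inv := fun z => rfl
        right_inv := fun z => rfl
        map_add' := fun z w => rfl
        map_smul' := fun c z => rfl }
    rw [eq.finrank_eq, Module.finrank_prod]
  rw [Matrix.rank, Matrix.rank, Matrix.rank, ← e.finrank_map_eq, hmap, prodEquiv]

end BridgeAux
/-- If `G₁` and `G₂` are finite connected graphs admitting nonnegative
curvatures and `G` is obtained by adding an edge between a vertex of `G₁` and a vertex
of `G₂`, then `rank(D_G) = rank(D₁) + rank(D₂)`. -/
theorem stmt_15 {V₁ V₂ : Type*} [Fintype V₁] [Fintype V₂]
    (G₁ : SimpleGraph V₁) (G₂ : SimpleGraph V₂)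
    (hG₁ : G₁.Connected) (hG₂ : G₂.Connected)
    (D₁ : Matrix V₁ V₁ ℝ) (hD₁ : ∀ a b, D₁ a b = (G₁.dist a b : ℝ))
    (D₂ : Matrix V₂ V₂ ℝ) (hD₂ : ∀ a b, D₂ a b = (G₂.dist a b : ℝ))
    (w₁ : V₁ → ℝ) (hw₁0 : ∀ i, 0 ≤ w₁ i)
    (hw₁ : D₁.mulVec w₁ = fun _ => (Fintype.card V₁ : ℝ))
    (w₂ : V₂ → ℝ) (hw₂0 : ∀ i, 0 ≤ w₂ i)
    (hw₂ : D₂.mulVec w₂ = fun _ => (Fintype.card V₂ : ℝ))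
    (u : V₁) (v : V₂)
    (DG : Matrix (V₁ ⊕ V₂) (V₁ ⊕ V₂) ℝ)
    (hDG : ∀ a b, DG a b = ((bridgeGraph G₁ G₂ u v).dist a b : ℝ)) :
    DG.rank = D₁.rank + D₂.rank := by
  classical
  open Matrix BridgeAux in
  -- basic facts
  have hne₁ : Nonempty V₁ := ⟨u⟩
  have hne₂ : Nonempty V₂ := ⟨v⟩
  set n₁ : ℝ := (Fintype.card V₁ : ℝ) with hn₁def
  set n₂ : ℝ := (Fintype.card V₂ : ℝ) with hn₂def
  have hn₁ : 0 < n₁ := by rw [hn₁def]; exact_mod_cast Fintype.card_pos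
  have hn₂ : 0 < n₂ := by rw [hn₂def]; exact_mod_cast Fintype.card_pos
  have hsym₁ : ∀ a b, D₁ a b = D₁ b a := fun a b => by
    rw [hD₁, hD₁, SimpleGraph.dist_comm]
  have hsym₂ : ∀ a b, D₂ a b = D₂ b a := fun a b => by
    rw [hD₂, hD₂, SimpleGraph.dist_comm]
  have hsymT₁ : D₁ᵀ = D₁ := Matrix.ext fun a b => hsym₁ b a
  have hD₁uu : D₁ u u = 0 := by rw [hD₁, SimpleGraph.dist_self]; simp
  have hD₂vv : D₂ v v = 0 := by rw [hD₂, SimpleGraph.dist_self]; simp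
  -- vectors
  set onef₁ : V₁ → ℝ := fun _ => 1 with honef₁
  set onef₂ : V₂ → ℝ := fun _ => 1 with honef₂
  set eu : V₁ → ℝ := Pi.single u 1 with heu
  set ev : V₂ → ℝ := Pi.single v 1 with hev
  set p₁ : V₁ → ℝ := n₁⁻¹ • w₁ with hp₁
  set p₂ : V₂ → ℝ := n₂⁻¹ • w₂ with hp₂
  set α : V₁ → ℝ := fun a => D₁ a u with hα
  set q : V₂ → ℝ := fun b => D₂ v b + 1 with hq
  set s₁ : ℝ := n₁⁻¹ * ∑ i, w₁ i with hs₁def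
  set s₂ : ℝ := n₂⁻¹ * ∑ i, w₂ i with hs₂def
  set t : V₂ → ℝ := onef₂ + s₁ • q with ht
  set r : V₂ → ℝ := ev + p₂ with hr
  -- positivity of s₁, nonnegativity of s₂
  have hsum₁ : 0 < ∑ i, w₁ i := by
    rcases lt_or_ge 0 (∑ i, w₁ i) with h | h
    · exact h
    · exfalso
      have hz : ∀ i ∈ Finset.univ, w₁ i = 0 := by
        intro i _
        have := Finset.sum_eq_zero_iff_of_nonneg (fun i _ => hw₁0 i) |>.mp
          (le_antisymm h (Finset.sum_nonneg fun i _ => hw₁0 i))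
        exact this i (Finset.mem_univ i)
      have hwz : w₁ = 0 := funext fun i => hz i (Finset.mem_univ i)
      rw [hwz, Matrix.mulVec_zero] at hw₁
      have h0 := congrFun hw₁ u
      simp only [Pi.zero_apply] at h0
      linarith
  have hs₁ : 0 < s₁ := by
    rw [hs₁def]; positivity
  have hs₂ : 0 ≤ s₂ := by
    rw [hs₂def]
    have : 0 ≤ ∑ i, w₂ i := Finset.sum_nonneg fun i _ => hw₂0 i
    positivity
  -- mulVec facts
  have hA_eu : D₁.mulVec eu = α := by
    rw [heu, Matrix.mulVec_single]; funext i; simp [hα]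
  have hA_p₁ : D₁.mulVec p₁ = onef₁ := by
    rw [hp₁, Matrix.mulVec_smul, hw₁]
    funext i; simp [honef₁]
  have hB_p₂ : D₂.mulVec p₂ = onef₂ := by
    rw [hp₂, Matrix.mulVec_smul, hw₂]
    funext i; simp [honef₂]
  have hB_ev : D₂.mulVec ev = fun b => D₂ b v := by
    rw [hev, Matrix.mulVec_single]; funext i; simp
  have hB_r : D₂.mulVec r = q := by
    rw [hr, Matrix.mulVec_add, hB_ev, hB_p₂]
    funext b; simp [hq, honef₂, hsym₂ b v]
  -- dot product facts
  have hBw₂v : ∑ b, D₂ v b * w₂ b = n₂ := by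
    have := congrFun hw₂ v
    simpa [Matrix.mulVec, dotProduct, ← hn₂def] using this
  have hw₁Du : ∑ i, w₁ i * D₁ i u = n₁ := by
    have := congrFun hw₁ u
    simp only [Matrix.mulVec, dotProduct, ← hn₁def] at this
    rw [← this]
    exact Finset.sum_congr rfl fun i _ => by rw [hsym₁ u i]; ring
  have hq_p₂ : q ⬝ᵥ p₂ = 1 + s₂ := by
    have : ∀ b, q b * p₂ b = n₂⁻¹ * (D₂ v b * w₂ b) + n₂⁻¹ * w₂ b := fun b => by
      simp [hq, hp₂, smul_eq_mul]; ring
    rw [dotProduct]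
    simp_rw [this]
    rw [Finset.sum_add_distrib, ← Finset.mul_sum, ← Finset.mul_sum, hBw₂v, hs₂def]
    field_simp
  have hq_ev : q ⬝ᵥ ev = 1 := by
    rw [hev, dotProduct_single, hq]; simp [hD₂vv]
  have hone_p₂ : onef₂ ⬝ᵥ p₂ = s₂ := by
    rw [dotProduct, hs₂def, Finset.mul_sum]
    exact Finset.sum_congr rfl fun i _ => by simp [honef₂, hp₂, smul_eq_mul]
  have hone_ev : onef₂ ⬝ᵥ ev = 1 := by
    rw [hev, dotProduct_single]; simp [honef₂]
  have heu_α : eu ⬝ᵥ α = 0 := by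
    rw [heu, single_dotProduct]; simp [hα, hD₁uu]
  have heu_one : eu ⬝ᵥ onef₁ = 1 := by
    rw [heu, single_dotProduct]; simp [honef₁]
  have hp₁_α : p₁ ⬝ᵥ α = 1 := by
    rw [dotProduct]
    have : ∀ i, p₁ i * α i = n₁⁻¹ * (w₁ i * D₁ i u) := fun i => by
      simp [hp₁, hα, smul_eq_mul]; ring
    simp_rw [this]
    rw [← Finset.mul_sum, hw₁Du]
    field_simp
  have hp₁_one : p₁ ⬝ᵥ onef₁ = s₁ := by
    rw [dotProduct, hs₁def, Finset.mul_sum]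
    exact Finset.sum_congr rfl fun i _ => by simp [honef₁, hp₁, smul_eq_mul]
  have hq_r : q ⬝ᵥ r = 2 + s₂ := by
    rw [hr, dotProduct_add, hq_ev, hq_p₂]; ring
  have ht_p₂ : t ⬝ᵥ p₂ = s₂ + s₁ * (1 + s₂) := by
    rw [ht, add_dotProduct, smul_dotProduct, hone_p₂, hq_p₂, smul_eq_mul]
  have ht_r : t ⬝ᵥ r = 1 + s₂ + s₁ * (2 + s₂) := by
    rw [ht, add_dotProduct, smul_dotProduct, hr, dotProduct_add, dotProduct_add,
      hone_ev, hone_p₂, hq_ev, hq_p₂, smul_eq_mul]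
    ring
  -- the X matrix and block structure of DG
  set X : Matrix V₁ V₂ ℝ := vecMulVec eu onef₂ + vecMulVec p₁ q with hXdef
  set M : Matrix V₁ V₂ ℝ := D₁ * X with hMdef
  have hM : M = vecMulVec α onef₂ + vecMulVec onef₁ q := by
    rw [hMdef, hXdef, Matrix.mul_add, mul_vmv, mul_vmv, hA_eu, hA_p₁]
  have hMT : Mᵀ = Xᵀ * D₁ := by
    rw [hMdef, Matrix.transpose_mul, hsymT₁]
  have hdist := fun x y => BridgeAux.bridge_dist_eq u v hG₁ hG₂ x y
  have hDGblocks : DG = Matrix.fromBlocks D₁ M Mᵀ D₂ := by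
    ext x y
    cases x with
    | inl a => cases y with
      | inl b =>
        rw [hDG, hdist]
        simp [BridgeAux.bd, hD₁]
      | inr b =>
        rw [hDG, hdist]
        simp only [BridgeAux.bd, Matrix.fromBlocks_apply₁₂, hM, Matrix.add_apply,
          Matrix.vecMulVec_apply, hα, hq, honef₁, honef₂, hD₁, hD₂]
        push_cast
        ring
    | inr a => cases y with
      | inl b =>
        rw [hDG, hdist]
        simp only [BridgeAux.bd, Matrix.fromBlocks_apply₂₁, Matrix.transpose_apply, hM,
          Matrix.add_apply, Matrix.vecMulVec_apply, hα, hq, honef₁, honef₂, hD₁, hD₂]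
        rw [show G₂.dist a v = G₂.dist v a from SimpleGraph.dist_comm,
          show G₁.dist u b = G₁.dist b u from SimpleGraph.dist_comm]
        push_cast
        ring
      | inr b =>
        rw [hDG, hdist]
        simp [BridgeAux.bd, hD₂]
  -- the Schur-type reduction
  set S : Matrix V₂ V₂ ℝ := Xᵀ * M with hSdef
  set E₁ : Matrix (V₁ ⊕ V₂) (V₁ ⊕ V₂) ℝ := Matrix.fromBlocks 1 (-X) 0 1 with hE₁def
  set E₂ : Matrix (V₁ ⊕ V₂) (V₁ ⊕ V₂) ℝ := Matrix.fromBlocks 1 0 (-Xᵀ) 1 with hE₂def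
  have h1 : DG * E₁ = Matrix.fromBlocks D₁ 0 Mᵀ (D₂ - S) := by
    rw [hDGblocks, hE₁def, Matrix.fromBlocks_multiply]
    rw [show D₁ * (1 : Matrix V₁ V₁ ℝ) + M * (0 : Matrix V₂ V₁ ℝ) = D₁ by simp,
      show D₁ * (-X) + M * (1 : Matrix V₂ V₂ ℝ) = 0 by rw [hMdef]; simp [Matrix.mul_neg],
      show Mᵀ * (1 : Matrix V₁ V₁ ℝ) + D₂ * (0 : Matrix V₂ V₁ ℝ) = Mᵀ by simp,
      show Mᵀ * (-X) + D₂ * (1 : Matrix V₂ V₂ ℝ) = D₂ - S by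
        rw [Matrix.mul_neg, hMT, Matrix.mul_assoc, ← hMdef, ← hSdef, Matrix.mul_one]
        abel]
  have h2 : E₂ * (DG * E₁) = Matrix.fromBlocks D₁ 0 0 (D₂ - S) := by
    rw [h1, hE₂def, Matrix.fromBlocks_multiply]
    rw [show (1 : Matrix V₁ V₁ ℝ) * D₁ + (0 : Matrix V₁ V₂ ℝ) * Mᵀ = D₁ by simp,
      show (1 : Matrix V₁ V₁ ℝ) * (0 : Matrix V₁ V₂ ℝ) + (0 : Matrix V₁ V₂ ℝ) * (D₂ - S) = 0 by
        simp,
      show (-Xᵀ) * D₁ + (1 : Matrix V₂ V₂ ℝ) * Mᵀ = 0 by rw [Matrix.neg_mul, hMT]; simp,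
      show (-Xᵀ) * (0 : Matrix V₁ V₂ ℝ) + (1 : Matrix V₂ V₂ ℝ) * (D₂ - S) = D₂ - S by simp]
  -- determinants of E₁ E₂ are 1
  have hdetE₁ : IsUnit E₁.det := by
    rw [hE₁def, Matrix.det_fromBlocks_zero₂₁]
    simp
  have hdetE₂ : IsUnit E₂.det := by
    rw [hE₂def, Matrix.det_fromBlocks_zero₁₂]
    simp
  -- computing S
  have hS : S = vecMulVec onef₂ q + vecMulVec q onef₂ + s₁ • vecMulVec q q := by
    rw [hSdef, hXdef, hM, Matrix.transpose_add, vmv_transpose, vmv_transpose,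
      Matrix.add_mul, Matrix.mul_add, Matrix.mul_add, vmv_mul_vmv, vmv_mul_vmv,
      vmv_mul_vmv, vmv_mul_vmv, heu_α, heu_one, hp₁_α, hp₁_one]
    simp only [zero_smul, one_smul, zero_add]
    abel
  -- S = D₂ * Z
  set Z : Matrix V₂ V₂ ℝ := vecMulVec p₂ q + vecMulVec r t with hZdef
  have hDZ : D₂ * Z = S := by
    rw [hZdef, Matrix.mul_add, mul_vmv, mul_vmv, hB_p₂, hB_r, hS, ht,
      vmv_add_right, vmv_smul_right]
    abel
  have hC : D₂ - S = D₂ * (1 - Z) := by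
    rw [Matrix.mul_sub, Matrix.mul_one, hDZ]
  -- invertibility of 1 - Z
  have hΔ : (1 - q ⬝ᵥ p₂) * (1 - t ⬝ᵥ r) - (q ⬝ᵥ r) * (t ⬝ᵥ p₂) ≠ 0 := by
    rw [hq_p₂, ht_r, hq_r, ht_p₂]
    nlinarith [hs₁, hs₂]
  have hunit : IsUnit (1 - Z) := by
    have : (1 : Matrix V₂ V₂ ℝ) - Z = 1 - vecMulVec p₂ q - vecMulVec r t := by
      rw [hZdef, sub_add_eq_sub_sub]
    rw [this]
    exact isUnit_one_sub_sub p₂ q r t hΔ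
  have hunitdet : IsUnit (1 - Z).det := (Matrix.isUnit_iff_isUnit_det _).mp hunit
  -- the rank computation
  have r1 : (E₂ * (DG * E₁)).rank = (DG * E₁).rank :=
    Matrix.rank_mul_eq_right_of_isUnit_det E₂ (DG * E₁) hdetE₂
  have r2 : (DG * E₁).rank = DG.rank :=
    Matrix.rank_mul_eq_left_of_isUnit_det E₁ DG hdetE₁
  have r3 : (Matrix.fromBlocks D₁ 0 0 (D₂ - S)).rank = D₁.rank + (D₂ - S).rank :=
    rank_blockDiag D₁ (D₂ - S)
  have r4 : (D₂ - S).rank = D₂.rank := by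
    rw [hC]
    exact Matrix.rank_mul_eq_left_of_isUnit_det (1 - Z) D₂ hunitdet
  rw [← r2, ← r1, h2, r3, r4]
end
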